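/- arXiv:2302.01253 — 3 statements merged into one kernel-verified Lean document; each statement's English description precedes it below -/
import Mathlib

section
/- For every nonnegative integer n, the number of 6-regular partitions of n into an even number of parts minus the number of 6-regular partitions of n into an odd number of parts equals (-1)^n times the number of partitions of n into distinct parts none of which is congruent to 2 or 4 modulo 6. -/
open Finset

/-- 6-regular partitions of `n` with an even number of parts. -/
def b6e (n : ℕ) : ℕ :=
  Fintype.card {P : Nat.Partition n // (∀ i ∈ P.parts, ¬ (6 ∣ i)) ∧ Even (Multiset.card P.parts)}

/-- 6-regular partitions of `n` with an odd number of parts. -/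
def b6o (n : ℕ) : ℕ :=
  Fintype.card {P : Nat.Partition n // (∀ i ∈ P.parts, ¬ (6 ∣ i)) ∧ Odd (Multiset.card P.parts)}

/-- Number of partitions of `n` into distinct parts not congruent to ±2 mod 6. -/
def Q2 (n : ℕ) : ℕ :=
  Fintype.card {P : Nat.Partition n // P.parts.Nodup ∧ ∀ i ∈ P.parts, i % 6 ≠ 2 ∧ i % 6 ≠ 4}



open PowerSeries

noncomputable section

variable {α : Type*}

open scoped Classical


variable {α : Type*}

open scoped Classical

def partialOddGF (m : ℕ) [Field α] :=
  ∏ i ∈ range m, (1 - (X : PowerSeries α) ^ (2 * i + 1))⁻¹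

def partialDistinctGF (m : ℕ) [CommSemiring α] :=
  ∏ i ∈ range m, (1 + (X : PowerSeries α) ^ (i + 1))

/-- A convenience constructor for the power series whose coefficients indicate a subset. -/
def indicatorSeries (α : Type*) [Semiring α] (s : Set ℕ) : PowerSeries α :=
  PowerSeries.mk fun n => if n ∈ s then 1 else 0

theorem coeff_indicator (s : Set ℕ) [Semiring α] (n : ℕ) :
    coeff (R := α) n (indicatorSeries _ s) = if n ∈ s then 1 else 0 :=
  coeff_mk _ _

theorem coeff_indicator_pos (s : Set ℕ) [Semiring α] (n : ℕ) (h : n ∈ s) :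
    coeff (R := α) n (indicatorSeries _ s) = 1 := by rw [coeff_indicator, if_pos h]

theorem coeff_indicator_neg (s : Set ℕ) [Semiring α] (n : ℕ) (h : n ∉ s) :
    coeff (R := α) n (indicatorSeries _ s) = 0 := by rw [coeff_indicator, if_neg h]

theorem constantCoeff_indicator (s : Set ℕ) [Semiring α] :
    constantCoeff (R := α) (indicatorSeries _ s) = if 0 ∈ s then 1 else 0 :=
  rfl

theorem two_series (i : ℕ) [Semiring α] :
    1 + (X : PowerSeries α) ^ i.succ = indicatorSeries α {0, i.succ} := by
  ext n
  simp only [coeff_indicator, coeff_one, coeff_X_pow, Set.mem_insert_iff, Set.mem_singleton_iff,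
    map_add]
  cases' n with d
  · simp [(Nat.succ_ne_zero i).symm]
  · simp [Nat.succ_ne_zero d]

theorem num_series' [Field α] (i : ℕ) :
    (1 - (X : PowerSeries α) ^ (i + 1))⁻¹ = indicatorSeries α {k | i + 1 ∣ k} := by
  rw [PowerSeries.inv_eq_iff_mul_eq_one]
  · ext n
    cases n with
    | zero => simp [mul_sub, zero_pow, constantCoeff_indicator]
    | succ n =>
      simp only [coeff_one, if_false, mul_sub, mul_one, coeff_indicator,
        LinearMap.map_sub, reduceCtorEq]
      simp_rw [coeff_mul, coeff_X_pow, coeff_indicator, @boole_mul _ _ _ _]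
      erw [@sum_ite _ _ _ _ _ (fun _ => Classical.propDecidable _), sum_ite]
      simp_rw [@filter_filter _ _ _ _ _, sum_const_zero, add_zero, sum_const, nsmul_eq_mul, mul_one,
        sub_eq_iff_eq_add, zero_add]
      symm
      split_ifs with h
      · suffices #{a ∈ antidiagonal (n + 1) | i + 1 ∣ a.fst ∧ a.snd = i + 1} = 1 by
          simp only [Set.mem_setOf_eq]; convert congr_arg ((↑) : ℕ → α) this; norm_cast
        rw [card_eq_one]
        cases' h with p hp
        refine ⟨((i + 1) * (p - 1), i + 1), ?_⟩
        ext ⟨a₁, a₂⟩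
        simp only [mem_filter, Prod.mk_inj, Finset.HasAntidiagonal.mem_antidiagonal, mem_singleton]
        constructor
        · rintro ⟨a_left, ⟨a, rfl⟩, rfl⟩
          refine ⟨?_, rfl⟩
          rw [Nat.mul_sub_left_distrib, ← hp, ← a_left, mul_one, Nat.add_sub_cancel]
        · rintro ⟨rfl, rfl⟩
          match p with
          | 0 => rw [mul_zero] at hp; cases hp
          | p + 1 => rw [hp]; simp [mul_add]
      · suffices #{a ∈ antidiagonal (n + 1) | i + 1 ∣ a.fst ∧ a.snd = i + 1} = 0 by
          simp only [Set.mem_setOf_eq]; convert congr_arg ((↑) : ℕ → α) this; norm_cast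
        rw [card_eq_zero]
        apply eq_empty_of_forall_notMem
        simp only [Prod.forall, mem_filter, not_and, Finset.HasAntidiagonal.mem_antidiagonal]
        rintro _ h₁ h₂ ⟨a, rfl⟩ rfl
        apply h
        simp [← h₂]
  · simp [zero_pow]

def mkOdd : ℕ ↪ ℕ :=
  ⟨fun i => 2 * i + 1, fun x y h => by linarith⟩

-- The main workhorse of the partition theorem proof.
theorem partialGF_prop (α : Type*) [CommSemiring α] (n : ℕ) (s : Finset ℕ) (hs : ∀ i ∈ s, 0 < i)
    (c : ℕ → Set ℕ) (hc : ∀ i, i ∉ s → 0 ∈ c i) :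
    #{p : n.Partition | (∀ j, p.parts.count j ∈ c j) ∧ ∀ j ∈ p.parts, j ∈ s} =
      coeff (R := α) n (∏ i ∈ s, indicatorSeries α ((· * i) '' c i)) := by
  simp_rw [coeff_prod, coeff_indicator, prod_boole, sum_boole]
  apply congr_arg
  simp only [mem_univ, forall_true_left, not_and, not_forall, exists_prop,
    Set.mem_image, not_exists]
  set φ : (a : Nat.Partition n) →
    a ∈ filter (fun p ↦ (∀ (j : ℕ), Multiset.count j p.parts ∈ c j) ∧ ∀ j ∈ p.parts, j ∈ s) univ →
    ℕ →₀ ℕ := fun p _ => {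
      toFun := fun i => Multiset.count i p.parts • i
      support := Finset.filter (fun i => i ≠ 0) p.parts.toFinset
      mem_support_toFun := fun a => by
        simp only [smul_eq_mul, ne_eq, mul_eq_zero, Multiset.count_eq_zero]
        rw [not_or, not_not]
        simp only [Multiset.mem_toFinset, not_not, mem_filter] }
  refine Finset.card_bij φ ?_ ?_ ?_
  · intro a ha
    simp only [φ, not_forall, not_exists, not_and, exists_prop, mem_filter]
    rw [mem_finsuppAntidiag]
    dsimp only [ne_eq, smul_eq_mul, id_eq, eq_mpr_eq_cast, le_eq_subset, Finsupp.coe_mk]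
    simp only [mem_univ, forall_true_left, not_and, not_forall, exists_prop,
      mem_filter, true_and] at ha
    refine ⟨⟨?_, fun i ↦ ?_⟩, fun i _ ↦ ⟨a.parts.count i, ha.1 i, rfl⟩⟩
    · conv_rhs => simp [← a.parts_sum]
      rw [sum_multiset_count_of_subset _ s]
      · simp only [smul_eq_mul]
      · intro i
        simp only [Multiset.mem_toFinset, not_not, mem_filter]
        apply ha.2
    · simp only [ne_eq, Multiset.mem_toFinset, not_not, mem_filter, and_imp]
      exact fun hi _ ↦ ha.2 i hi
  · intro p₁ hp₁ p₂ hp₂ h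
    apply Nat.Partition.ext
    simp only [true_and, mem_univ, mem_filter] at hp₁ hp₂
    ext i
    simp only [φ, ne_eq, Multiset.mem_toFinset, not_not, smul_eq_mul, Finsupp.mk.injEq] at h
    by_cases hi : i = 0
    · rw [hi]
      rw [Multiset.count_eq_zero_of_notMem]
      · rw [Multiset.count_eq_zero_of_notMem]
        intro a; exact Nat.lt_irrefl 0 (hs 0 (hp₂.2 0 a))
      intro a; exact Nat.lt_irrefl 0 (hs 0 (hp₁.2 0 a))
    · rw [← mul_left_inj' hi]
      rw [funext_iff] at h
      exact h.2 i
  · simp only [φ, mem_filter, mem_finsuppAntidiag, mem_univ, exists_prop, true_and, and_assoc]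
    rintro f ⟨hf, hf₃, hf₄⟩
    have hf' : f ∈ finsuppAntidiag s n := mem_finsuppAntidiag.mpr ⟨hf, hf₃⟩
    simp only [mem_finsuppAntidiag] at hf'
    refine ⟨⟨∑ i ∈ s, Multiset.replicate (f i / i) i, ?_, ?_⟩, ?_, ?_, ?_⟩
    · intro i hi
      simp only [exists_prop, Multiset.mem_sum, mem_map, Function.Embedding.coeFn_mk] at hi
      rcases hi with ⟨t, ht, z⟩
      apply hs
      rwa [Multiset.eq_of_mem_replicate z]
    · simp_rw [Multiset.sum_sum, Multiset.sum_replicate, Nat.nsmul_eq_mul]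
      rw [← hf'.1]
      refine sum_congr rfl fun i hi => Nat.div_mul_cancel ?_
      rcases hf₄ i hi with ⟨w, _, hw₂⟩
      rw [← hw₂]
      exact dvd_mul_left _ _
    · intro i
      simp_rw [Multiset.count_sum', Multiset.count_replicate, sum_ite_eq']
      split_ifs with h
      · rcases hf₄ i h with ⟨w, hw₁, hw₂⟩
        rwa [← hw₂, Nat.mul_div_cancel _ (hs i h)]
      · exact hc _ h
    · intro i hi
      rw [Multiset.mem_sum] at hi
      rcases hi with ⟨j, hj₁, hj₂⟩
      rwa [Multiset.eq_of_mem_replicate hj₂]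
    · ext i
      simp_rw [Multiset.count_sum', Multiset.count_replicate, sum_ite_eq']
      simp only [ne_eq, Multiset.mem_toFinset, not_not, smul_eq_mul, ite_mul,
        zero_mul, Finsupp.coe_mk]
      split_ifs with h
      · apply Nat.div_mul_cancel
        rcases hf₄ i h with ⟨w, _, hw₂⟩
        apply Dvd.intro_left _ hw₂
      · apply symm
        rw [← Finsupp.notMem_support_iff]
        exact notMem_mono hf'.2 h

theorem partialOddGF_prop [Field α] (n m : ℕ) :
    #{p : n.Partition | ∀ j ∈ p.parts, j ∈ (range m).map mkOdd} = coeff (R := α) n (partialOddGF m) := by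
  rw [partialOddGF]
  convert partialGF_prop α n
    ((range m).map mkOdd) _ (fun _ => Set.univ) (fun _ _ => trivial) using 2
  · congr
    simp only [true_and, forall_const, Set.mem_univ]
  · rw [Finset.prod_map]
    simp_rw [num_series']
    congr! 2 with x
    ext k
    constructor
    · rintro ⟨p, rfl⟩
      refine ⟨p, ⟨⟩, ?_⟩
      apply mul_comm
    rintro ⟨a_w, -, rfl⟩
    apply Dvd.intro_left a_w rfl
  · intro i
    rw [mem_map]
    rintro ⟨a, -, rfl⟩
    exact Nat.succ_pos _

/-- If m is big enough, the partial product's coefficient counts the number of odd partitions -/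
theorem oddGF_prop [Field α] (n m : ℕ) (h : n < m * 2) :
    #(Nat.Partition.odds n) = coeff (R := α) n (partialOddGF m) := by
  rw [← partialOddGF_prop, Nat.Partition.odds, Nat.Partition.restricted]
  congr with p
  apply forall₂_congr
  intro i hi
  have hin : i ≤ n := by
    simpa [p.parts_sum] using Multiset.single_le_sum (fun _ _ => Nat.zero_le _) _ hi
  simp only [mkOdd, exists_prop, mem_range, Function.Embedding.coeFn_mk, mem_map]
  constructor
  · intro hi₂
    have := Nat.mod_add_div i 2
    rw [Nat.not_even_iff] at hi₂
    rw [hi₂, add_comm] at this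
    refine ⟨i / 2, ?_, this⟩
    rw [Nat.div_lt_iff_lt_mul zero_lt_two]
    exact lt_of_le_of_lt hin h
  · rintro ⟨a, -, rfl⟩
    rw [even_iff_two_dvd]
    apply Nat.two_not_dvd_two_mul_add_one

theorem partialDistinctGF_prop [CommSemiring α] (n m : ℕ) :
    #{p : n.Partition |
        p.parts.Nodup ∧ ∀ j ∈ p.parts, j ∈ (range m).map ⟨Nat.succ, Nat.succ_injective⟩} =
      coeff (R := α) n (partialDistinctGF m) := by
  rw [partialDistinctGF]
  convert partialGF_prop α n
    ((range m).map ⟨Nat.succ, Nat.succ_injective⟩) _ (fun _ => {0, 1}) (fun _ _ => Or.inl rfl)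
    using 2
  · congr! with p
    rw [Multiset.nodup_iff_count_le_one]
    congr! 1 with i
    rcases Multiset.count i p.parts with (_ | _ | ms) <;> simp
  · simp_rw [Finset.prod_map, two_series]
    congr with i
    simp [Set.image_pair]
  · simp only [mem_map, Function.Embedding.coeFn_mk]
    rintro i ⟨_, _, rfl⟩
    apply Nat.succ_pos

/-- If m is big enough, the partial product's coefficient counts the number of distinct partitions
-/
theorem distinctGF_prop [CommSemiring α] (n m : ℕ) (h : n < m + 1) :
    #(Nat.Partition.distincts n) = coeff (R := α) n (partialDistinctGF m) := by
  rw [← partialDistinctGF_prop, Nat.Partition.distincts]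
  congr with p
  apply (and_iff_left _).symm
  intro i hi
  have : i ≤ n := by
    simpa [p.parts_sum] using Multiset.single_le_sum (fun _ _ => Nat.zero_le _) _ hi
  simp only [mkOdd, exists_prop, mem_range, Function.Embedding.coeFn_mk, mem_map]
  refine ⟨i - 1, ?_, Nat.succ_pred_eq_of_pos (p.parts_pos hi)⟩
  rw [tsub_lt_iff_right (Nat.one_le_iff_ne_zero.mpr (p.parts_pos hi).ne')]
  exact lt_of_le_of_lt this h

/-- The key proof idea for the partition theorem, showing that the generating functions for both
sequences are ultimately the same (since the factor converges to 0 as m tends to infinity).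
It's enough to not take the limit though, and just consider large enough `m`.
-/
theorem same_gf [Field α] (m : ℕ) :
    (partialOddGF m * (range m).prod fun i => 1 - (X : PowerSeries α) ^ (m + i + 1)) =
      partialDistinctGF m := by
  rw [partialOddGF, partialDistinctGF]
  induction' m with m ih
  · simp
  set! π₀ : PowerSeries α := ∏ i ∈ range m, (1 - X ^ (m + 1 + i + 1)) with hπ₀
  set! π₁ : PowerSeries α := ∏ i ∈ range m, (1 - X ^ (2 * i + 1))⁻¹ with hπ₁
  set! π₂ : PowerSeries α := ∏ i ∈ range m, (1 - X ^ (m + i + 1)) with hπ₂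
  set! π₃ : PowerSeries α := ∏ i ∈ range m, (1 + X ^ (i + 1)) with hπ₃
  rw [← hπ₃] at ih
  have h : constantCoeff (R := α) (1 - X ^ (2 * m + 1)) ≠ 0 := by
    rw [RingHom.map_sub, RingHom.map_pow, constantCoeff_one, constantCoeff_X,
      zero_pow (2 * m).succ_ne_zero, sub_zero]
    exact one_ne_zero
  calc
    (∏ i ∈ range (m + 1), (1 - X ^ (2 * i + 1))⁻¹) *
          ∏ i ∈ range (m + 1), (1 - X ^ (m + 1 + i + 1)) =
        π₁ * (1 - X ^ (2 * m + 1))⁻¹ * (π₀ * (1 - X ^ (m + 1 + m + 1))) := by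
      rw [prod_range_succ _ m, ← hπ₁, prod_range_succ _ m, ← hπ₀]
    _ = π₁ * (1 - X ^ (2 * m + 1))⁻¹ * (π₀ * ((1 + X ^ (m + 1)) * (1 - X ^ (m + 1)))) := by
      rw [← sq_sub_sq, one_pow, add_assoc _ m 1, ← two_mul (m + 1), pow_mul']
    _ = π₀ * (1 - X ^ (m + 1)) * (1 - X ^ (2 * m + 1))⁻¹ * (π₁ * (1 + X ^ (m + 1))) := by ring
    _ =
        (∏ i ∈ range (m + 1), (1 - X ^ (m + 1 + i))) * (1 - X ^ (2 * m + 1))⁻¹ *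
          (π₁ * (1 + X ^ (m + 1))) := by
      rw [prod_range_succ', add_zero, hπ₀]; simp_rw [← add_assoc]
    _ = π₂ * (1 - X ^ (m + 1 + m)) * (1 - X ^ (2 * m + 1))⁻¹ * (π₁ * (1 + X ^ (m + 1))) := by
      rw [add_right_comm, hπ₂, ← prod_range_succ]; simp_rw [add_right_comm]
    _ = π₂ * (1 - X ^ (2 * m + 1)) * (1 - X ^ (2 * m + 1))⁻¹ * (π₁ * (1 + X ^ (m + 1))) := by
      rw [two_mul, add_right_comm _ m 1]
    _ = (1 - X ^ (2 * m + 1)) * (1 - X ^ (2 * m + 1))⁻¹ * π₂ * (π₁ * (1 + X ^ (m + 1))) := by ring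
    _ = π₂ * (π₁ * (1 + X ^ (m + 1))) := by rw [PowerSeries.mul_inv_cancel _ h, one_mul]
    _ = π₁ * π₂ * (1 + X ^ (m + 1)) := by ring
    _ = π₃ * (1 + X ^ (m + 1)) := by rw [ih]
    _ = _ := by rw [prod_range_succ]




/-- signed indicator series: geometric series in -X^i -/
def sgf (α : Type*) [CommRing α] (i : ℕ) : PowerSeries α :=
  PowerSeries.mk fun k => if i ∣ k then (-1 : α) ^ (k / i) else 0

theorem sgf_mul (α : Type*) [CommRing α] (i : ℕ) (hi : 0 < i) :
    sgf α i * (1 + X ^ i) = 1 := by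
  have : sgf α i * (1 + X ^ i) = sgf α i + sgf α i * X ^ i := by ring
  rw [this]
  ext k
  rw [map_add, PowerSeries.coeff_mul_X_pow']
  rcases Nat.eq_zero_or_pos k with rfl | hk
  · have h1 : ¬ i ≤ 0 := by omega
    simp only [sgf, coeff_mk, if_pos (dvd_zero i), Nat.zero_div, pow_zero, if_neg h1,
      add_zero, coeff_one, if_pos rfl]
    simp
  · rw [PowerSeries.coeff_one, if_neg hk.ne']
    simp only [sgf, coeff_mk]
    by_cases hle : i ≤ k
    · rw [if_pos hle]
      by_cases hd : i ∣ k
      · have hd2 : i ∣ k - i := Nat.dvd_sub hd dvd_rfl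
        rw [if_pos hd, if_pos hd2]
        have h3 : (k - i) / i = k / i - 1 := by
          obtain ⟨c, rfl⟩ := hd
          match c with
          | 0 => omega
          | Nat.succ c =>
            rw [Nat.mul_succ, Nat.add_sub_cancel, Nat.mul_div_cancel_left _ hi]
            rw [show i * c + i = i * (c+1) by ring, Nat.mul_div_cancel_left _ hi]
            omega
        rw [h3]
        have hk1 : 1 ≤ k / i := (Nat.one_le_div_iff hi).mpr hle
        have h4 : (-1 : α) ^ (k / i) = (-1) ^ (k / i - 1 + 1) := by congr 1; omega
        rw [h4, pow_succ]
        ring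
      · have hd2 : ¬ i ∣ k - i := fun h => hd (by simpa [Nat.sub_add_cancel hle] using Dvd.dvd.add h (dvd_refl i))
        rw [if_neg hd, if_neg hd2, add_zero]
    · rw [if_neg hle, add_zero]
      have hd : ¬ i ∣ k := fun h => hle (Nat.le_of_dvd hk h)
      rw [if_neg hd]

theorem signedGF_prop (α : Type*) [CommRing α] (n : ℕ) (s : Finset ℕ) (hs : ∀ i ∈ s, 0 < i) :
    (∑ p ∈ Finset.univ.filter (fun p : Nat.Partition n => ∀ j ∈ p.parts, j ∈ s),
        (-1 : α) ^ (Multiset.card p.parts)) =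
      coeff (R := α) n (∏ i ∈ s, sgf α i) := by
  rw [coeff_prod]
  simp_rw [sgf, coeff_mk]
  rw [← Finset.sum_filter_of_ne (p := fun l : ℕ →₀ ℕ => ∀ i ∈ s, i ∣ l i)
    (by
      intro l _ hl i hi
      by_contra hnd
      exact hl (Finset.prod_eq_zero hi (if_neg hnd)))]
  set φ : (p : Nat.Partition n) →
    p ∈ Finset.univ.filter (fun p : Nat.Partition n => ∀ j ∈ p.parts, j ∈ s) → (ℕ →₀ ℕ) :=
    fun p _ => {
      toFun := fun i => Multiset.count i p.parts • i
      support := Finset.filter (fun i => i ≠ 0) p.parts.toFinset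
      mem_support_toFun := fun a => by
        simp only [smul_eq_mul, ne_eq, mul_eq_zero, Multiset.count_eq_zero]
        rw [not_or, not_not]
        simp only [Multiset.mem_toFinset, not_not, Finset.mem_filter] } with hφ
  refine Finset.sum_bij φ ?_ ?_ ?_ ?_
  · intro p hp
    simp only [Finset.mem_filter, Finset.mem_univ, true_and] at hp
    rw [Finset.mem_filter, Finset.mem_finsuppAntidiag]
    refine ⟨⟨?_, ?_⟩, fun i _ => ?_⟩
    · conv_rhs => rw [← p.parts_sum]
      rw [Finset.sum_multiset_count_of_subset _ s]
      · simp only [hφ, smul_eq_mul, Finsupp.coe_mk]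
      · intro i
        simp only [Multiset.mem_toFinset]
        apply hp
    · intro i hi
      simp only [hφ, ne_eq, Finset.mem_filter, Multiset.mem_toFinset] at hi
      exact hp i hi.1
    · simp only [hφ, Finsupp.coe_mk, smul_eq_mul]
      exact dvd_mul_left _ _
  · intro p₁ hp₁ p₂ hp₂ h
    apply Nat.Partition.ext
    simp only [Finset.mem_filter, Finset.mem_univ, true_and] at hp₁ hp₂
    ext i
    simp only [hφ, ne_eq, Multiset.mem_toFinset, not_not, smul_eq_mul, Finsupp.mk.injEq] at h
    by_cases hi : i = 0
    · rw [hi]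
      rw [Multiset.count_eq_zero_of_notMem]
      · rw [Multiset.count_eq_zero_of_notMem]
        intro a; exact Nat.lt_irrefl 0 (hs 0 (hp₂ 0 a))
      intro a; exact Nat.lt_irrefl 0 (hs 0 (hp₁ 0 a))
    · rw [← mul_left_inj' hi]
      rw [funext_iff] at h
      exact h.2 i
  · simp only [Finset.mem_filter, Finset.mem_finsuppAntidiag, Finset.mem_univ, true_and, and_assoc]
    rintro f ⟨hf₁, hf₂, hf₄⟩
    refine ⟨⟨∑ i ∈ s, Multiset.replicate (f i / i) i, ?_, ?_⟩, ?_, ?_⟩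
    · intro i hi
      simp only [exists_prop, Multiset.mem_sum, Multiset.mem_map] at hi
      rcases hi with ⟨t, ht, z⟩
      apply hs
      rwa [Multiset.eq_of_mem_replicate z]
    · simp_rw [Multiset.sum_sum, Multiset.sum_replicate, Nat.nsmul_eq_mul]
      rw [← hf₁]
      refine Finset.sum_congr rfl fun i hi => Nat.div_mul_cancel (hf₄ i hi)
    · intro i hi
      rw [Multiset.mem_sum] at hi
      rcases hi with ⟨j, hj₁, hj₂⟩
      rwa [Multiset.eq_of_mem_replicate hj₂]
    · ext i
      simp_rw [hφ, Multiset.count_sum', Multiset.count_replicate, Finset.sum_ite_eq']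
      simp only [ne_eq, Multiset.mem_toFinset, not_not, smul_eq_mul, ite_mul,
        zero_mul, Finsupp.coe_mk]
      split_ifs with h
      · exact Nat.div_mul_cancel (hf₄ i h)
      · apply symm
        rw [← Finsupp.notMem_support_iff]
        exact Finset.notMem_mono hf₂ h
  · intro p hp
    have hp' : ∀ j ∈ p.parts, j ∈ s := by
      simpa only [Finset.mem_filter, Finset.mem_univ, true_and] using hp
    have key : ∀ i ∈ s, (if i ∣ (φ p hp : ℕ →₀ ℕ) i
        then (-1 : α) ^ ((φ p hp : ℕ →₀ ℕ) i / i) else 0)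
        = (-1 : α) ^ (Multiset.count i p.parts) := by
      intro i hi
      simp only [hφ, Finsupp.coe_mk, smul_eq_mul]
      rw [if_pos (dvd_mul_left _ _), Nat.mul_div_cancel _ (hs i hi)]
    rw [Finset.prod_congr rfl key, Finset.prod_pow_eq_pow_sum]
    congr 1
    rw [← Multiset.toFinset_sum_count_eq p.parts]
    exact Finset.sum_subset (fun i hi => hp' i (Multiset.mem_toFinset.mp hi))
      (fun i _ hi => Multiset.count_eq_zero_of_notMem (fun h => hi (Multiset.mem_toFinset.mpr h)))

def t0 (n : ℕ) : Finset ℕ := (range (n+1)).filter (fun i => 0 < i)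
def fs1 (n : ℕ) : Finset ℕ := (t0 n).filter (fun i => ¬ (6 ∣ i))
def fs2 (n : ℕ) : Finset ℕ := (t0 n).filter (fun i => i % 6 ≠ 2 ∧ i % 6 ≠ 4)

lemma mem_t0 {n i : ℕ} : i ∈ t0 n ↔ i < n + 1 ∧ 0 < i := by simp [t0]

lemma parts_le {n : ℕ} (p : n.Partition) {i : ℕ} (hi : i ∈ p.parts) : i ≤ n := by
  simpa [p.parts_sum] using Multiset.single_le_sum (fun _ _ => Nat.zero_le _) _ hi

lemma fs1_pos {n : ℕ} : ∀ i ∈ fs1 n, 0 < i := by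
  intro i hi; simp [fs1, mem_t0] at hi; exact hi.1.2

lemma fs2_pos {n : ℕ} : ∀ i ∈ fs2 n, 0 < i := by
  intro i hi; simp [fs2, mem_t0] at hi; exact hi.1.2

/-- Step 1: signed count of 6-regular partitions as a coefficient. -/
lemma L1 (n : ℕ) :
    (b6e n : ℚ) - (b6o n : ℚ) = coeff (R := ℚ) n (∏ i ∈ fs1 n, sgf ℚ i) := by
  rw [← signedGF_prop ℚ n (fs1 n) fs1_pos]
  have hcongr : Finset.univ.filter (fun p : Nat.Partition n => ∀ j ∈ p.parts, j ∈ fs1 n)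
      = Finset.univ.filter (fun p => ∀ j ∈ p.parts, ¬ (6 ∣ j)) := by
    apply Finset.filter_congr
    intro p _
    apply forall₂_congr
    intro i hi
    have h1 : i ≤ n := parts_le p hi
    have h2 : 0 < i := p.parts_pos hi
    simp [fs1, mem_t0, Nat.lt_succ_of_le h1, h2]
  rw [hcongr, ← Finset.sum_filter_add_sum_filter_not _
    (fun p : Nat.Partition n => Even (Multiset.card p.parts)), Finset.filter_filter,
    Finset.filter_filter]
  have e1 : ∀ p ∈ Finset.univ.filter (fun p : Nat.Partition n =>
      (∀ j ∈ p.parts, ¬ (6 ∣ j)) ∧ Even (Multiset.card p.parts)),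
      ((-1 : ℚ)) ^ (Multiset.card p.parts) = 1 := by
    intro p hp
    simp only [Finset.mem_filter] at hp
    exact Even.neg_one_pow hp.2.2
  have e2 : ∀ p ∈ Finset.univ.filter (fun p : Nat.Partition n =>
      (∀ j ∈ p.parts, ¬ (6 ∣ j)) ∧ ¬ Even (Multiset.card p.parts)),
      ((-1 : ℚ)) ^ (Multiset.card p.parts) = -1 := by
    intro p hp
    simp only [Finset.mem_filter] at hp
    exact Odd.neg_one_pow (Nat.not_even_iff_odd.mp hp.2.2)
  rw [Finset.sum_congr rfl e1, Finset.sum_congr rfl e2, Finset.sum_const, Finset.sum_const]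
  have hb1 : b6e n = (Finset.univ.filter (fun p : Nat.Partition n =>
      (∀ j ∈ p.parts, ¬ (6 ∣ j)) ∧ Even (Multiset.card p.parts))).card := by
    rw [b6e, Fintype.card_subtype]
  have hb2 : b6o n = (Finset.univ.filter (fun p : Nat.Partition n =>
      (∀ j ∈ p.parts, ¬ (6 ∣ j)) ∧ ¬ Even (Multiset.card p.parts))).card := by
    rw [b6o, Fintype.card_subtype]
    congr 1
    apply Finset.filter_congr
    intro p _
    simp [Nat.not_even_iff_odd]
  rw [hb1, hb2]
  simp only [nsmul_eq_mul, mul_one, mul_neg_one]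
  ring

lemma two_series' (i : ℕ) (hi : 0 < i) :
    1 + (X : PowerSeries ℚ) ^ i = indicatorSeries ℚ {0, i} := by
  obtain ⟨j, rfl⟩ := Nat.exists_eq_add_of_lt hi
  rw [zero_add]
  exact two_series j

/-- Step 2: Q2 as a coefficient. -/
lemma L2 (n : ℕ) :
    (Q2 n : ℚ) = coeff (R := ℚ) n (∏ i ∈ fs2 n, (1 + (X : PowerSeries ℚ) ^ i)) := by
  have hprop := partialGF_prop ℚ n (fs2 n) fs2_pos (fun _ => {0, 1}) (fun _ _ => Or.inl rfl)
  have hind : ∀ i ∈ fs2 n, indicatorSeries ℚ ((· * i) '' {0, 1}) = 1 + X ^ i := by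
    intro i hi
    rw [two_series' i (fs2_pos i hi)]
    congr 1
    simp [Set.image_pair]
  rw [Finset.prod_congr rfl hind] at hprop
  rw [← hprop]
  rw [Q2, Fintype.card_subtype]
  congr 1
  congr 1
  apply Finset.filter_congr
  intro p _
  constructor
  · rintro ⟨hnd, hmod⟩
    constructor
    · intro j
      rw [Multiset.nodup_iff_count_le_one] at hnd
      have := hnd j
      interval_cases h : Multiset.count j p.parts
      · exact Or.inl rfl
      · exact Or.inr rfl
    · intro j hj
      have h1 : j ≤ n := parts_le p hj
      have h2 : 0 < j := p.parts_pos hj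
      simp [fs2, mem_t0, Nat.lt_succ_of_le h1, h2, hmod j hj]
  · rintro ⟨hcount, hmem⟩
    constructor
    · rw [Multiset.nodup_iff_count_le_one]
      intro j
      have h := hcount j
      simp only [Set.mem_insert_iff, Set.mem_singleton_iff] at h
      omega
    · intro j hj
      have := hmem j hj
      simp [fs2, mem_t0] at this
      exact this.2

lemma L4 (i : ℕ) (hi : 0 < i) :
    rescale (-1 : ℚ) (1 + X ^ i) =
      if Odd i then 1 - (X : PowerSeries ℚ) ^ i else 1 + X ^ i := by
  ext k
  rw [coeff_rescale]
  by_cases ho : Odd i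
  · rw [if_pos ho]
    simp only [map_add, map_sub, coeff_one, coeff_X_pow]
    by_cases hk0 : k = 0
    · subst hk0
      rw [if_neg (show ¬ (0 : ℕ) = i by omega)]
      norm_num
    · by_cases hki : k = i
      · subst hki
        simp only [if_neg hk0, if_pos rfl]
        rw [Odd.neg_one_pow ho]
        ring
      · simp [hk0, hki]
  · rw [if_neg ho]
    simp only [map_add, coeff_one, coeff_X_pow]
    have he : Even i := Nat.not_odd_iff_even.mp ho
    by_cases hk0 : k = 0
    · subst hk0
      rw [if_neg (show ¬ (0 : ℕ) = i by omega)]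
      norm_num
    · by_cases hki : k = i
      · subst hki
        simp only [if_neg hk0, if_pos rfl]
        rw [Even.neg_one_pow he]
        ring
      · simp [hk0, hki]

/-- Step 3: `(-1)^n * Q2 n` as a coefficient. -/
lemma L3 (n : ℕ) :
    ((-1 : ℚ)) ^ n * (Q2 n : ℚ) =
      coeff (R := ℚ) n (∏ i ∈ fs2 n, (if Odd i then 1 - (X : PowerSeries ℚ) ^ i else 1 + X ^ i)) := by
  have : (∏ i ∈ fs2 n, (if Odd i then 1 - (X : PowerSeries ℚ) ^ i else 1 + X ^ i))
      = rescale (-1 : ℚ) (∏ i ∈ fs2 n, (1 + X ^ i)) := by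
    rw [map_prod]
    exact Finset.prod_congr rfl fun i hi => (L4 i (fs2_pos i hi)).symm
  rw [this, coeff_rescale, ← L2]

/-- Step 4: algebraic identity between products. -/
lemma L5 (n : ℕ) :
    (∏ i ∈ fs2 n, (if Odd i then 1 - (X : PowerSeries ℚ) ^ i else 1 + X ^ i)) *
      (∏ i ∈ fs1 n, (1 + (X : PowerSeries ℚ) ^ i)) =
    (∏ i ∈ (t0 n).filter (fun i => Odd i), (1 - (X : PowerSeries ℚ) ^ i)) *
      (∏ i ∈ t0 n, (1 + X ^ i)) := by
  rw [fs1, fs2, Finset.prod_filter, Finset.prod_filter, Finset.prod_filter,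
    ← Finset.prod_mul_distrib, ← Finset.prod_mul_distrib]
  apply Finset.prod_congr rfl
  intro i hi
  have hpos : 0 < i := (mem_t0.mp hi).2
  have hmod : i % 2 = i % 6 % 2 := (Nat.mod_mod_of_dvd i (by norm_num)).symm
  by_cases ho : Odd i
  · rw [Nat.odd_iff] at ho
    have h6 : ¬ (6 ∣ i) := by omega
    have hc : i % 6 ≠ 2 ∧ i % 6 ≠ 4 := by omega
    rw [if_pos hc, if_pos (Nat.odd_iff.mpr ho), if_pos h6, if_pos (Nat.odd_iff.mpr ho)]
  · have ho' : i % 2 = 0 := by rw [Nat.not_odd_iff_even, Nat.even_iff] at ho; exact ho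
    by_cases h6 : 6 ∣ i
    · have hc : i % 6 ≠ 2 ∧ i % 6 ≠ 4 := by omega
      rw [if_pos hc, if_neg ho, if_neg (not_not_intro h6), if_neg ho]
      ring
    · have hc : ¬ (i % 6 ≠ 2 ∧ i % 6 ≠ 4) := by omega
      rw [if_neg hc, if_pos h6, if_neg ho]

/-- Step 5: the signed product times the plus-product is 1. -/
lemma L7 (n : ℕ) :
    (∏ i ∈ fs1 n, sgf ℚ i) * (∏ i ∈ fs1 n, (1 + (X : PowerSeries ℚ) ^ i)) = 1 := by
  rw [← Finset.prod_mul_distrib]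
  rw [Finset.prod_congr rfl fun i hi => sgf_mul ℚ i (fs1_pos i hi)]
  exact Finset.prod_const_one

lemma dvd_one_sub_of_coeff {n : ℕ} {f : PowerSeries ℚ}
    (h : ∀ k ≤ n, coeff (R := ℚ) k f = coeff (R := ℚ) k 1) :
    (X : PowerSeries ℚ) ^ (n + 1) ∣ (1 - f) := by
  rw [PowerSeries.X_pow_dvd_iff]
  intro m hm
  rw [map_sub, h m (by omega), sub_self]

lemma coeff_prod_one_sub_big {n : ℕ} {s : Finset ℕ} (hbig : ∀ i ∈ s, n < i) :
    ∀ k ≤ n, coeff (R := ℚ) k (∏ i ∈ s, (1 - (X : PowerSeries ℚ) ^ i)) = coeff (R := ℚ) k 1 := by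
  intro k hk
  have := coeff_mul_prod_one_sub_of_lt_order k s (1 : PowerSeries ℚ) (fun i => X ^ i)
    (fun i hi => by
      rw [order_X_pow]
      exact_mod_cast lt_of_le_of_lt hk (hbig i hi))
  simpa using this

/-- Step 6: Euler-type truncated identity. -/
lemma L6 (n : ℕ) :
    (X : PowerSeries ℚ) ^ (n + 1) ∣
      (1 - (∏ i ∈ (t0 n).filter (fun i => Odd i), (1 - (X : PowerSeries ℚ) ^ i)) *
        (∏ i ∈ t0 n, (1 + X ^ i))) := by
  set D : PowerSeries ℚ := ∏ i ∈ (t0 n).filter (fun i => Odd i), (1 - X ^ i) with hD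
  set P : PowerSeries ℚ := ∏ i ∈ t0 n, (1 + X ^ i) with hPdef
  set W : PowerSeries ℚ := ∏ i ∈ range n, (1 - X ^ (n + i + 1)) with hWdef
  set Dfull : PowerSeries ℚ := ∏ i ∈ range n, (1 - X ^ (2 * i + 1)) with hDf
  have hP : P = partialDistinctGF n := by
    have ht : t0 n = (range n).map ⟨Nat.succ, Nat.succ_injective⟩ := by
      ext a
      simp only [mem_t0, Finset.mem_map, Finset.mem_range, Function.Embedding.coeFn_mk]
      constructor
      · rintro ⟨h1, h2⟩; exact ⟨a - 1, by omega, by omega⟩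
      · rintro ⟨b, hb, rfl⟩; omega
    rw [hPdef, ht, Finset.prod_map, partialDistinctGF]
    rfl
  have hDO : Dfull * partialOddGF n = 1 := by
    rw [hDf, partialOddGF, ← Finset.prod_mul_distrib]
    rw [Finset.prod_congr rfl fun i _ => PowerSeries.mul_inv_cancel _ (by
      rw [RingHom.map_sub, RingHom.map_pow, constantCoeff_one, constantCoeff_X,
        zero_pow (2 * i).succ_ne_zero, sub_zero]
      exact one_ne_zero)]
    exact Finset.prod_const_one
  have hW : Dfull * partialDistinctGF n = W := by
    rw [← same_gf n, ← mul_assoc, hDO, one_mul]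
  have hsub : (t0 n).filter (fun i => Odd i) ⊆ (range n).map mkOdd := by
    intro i hi
    simp only [Finset.mem_filter, mem_t0, Nat.odd_iff] at hi
    simp only [Finset.mem_map, Finset.mem_range, mkOdd, Function.Embedding.coeFn_mk]
    simp only [DFunLike.coe]
    exact ⟨(i - 1) / 2, by omega, by omega⟩
  have hsdiff := Finset.prod_sdiff (f := fun i => (1 : PowerSeries ℚ) - X ^ i) hsub
  set E : PowerSeries ℚ :=
    ∏ i ∈ (range n).map mkOdd \ (t0 n).filter (fun i => Odd i), (1 - X ^ i) with hE
  have hDfull_map : Dfull = ∏ i ∈ (range n).map mkOdd, (1 - (X : PowerSeries ℚ) ^ i) := by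
    rw [hDf, Finset.prod_map]
    rfl
  have hW3 : W = D * P * E := by
    rw [← hW, hP, hDfull_map, ← hsdiff]
    ring
  have hbigE : ∀ i ∈ (range n).map mkOdd \ (t0 n).filter (fun i => Odd i), n < i := by
    intro i hi
    simp only [Finset.mem_sdiff, Finset.mem_map, Finset.mem_range, mkOdd,
      Function.Embedding.coeFn_mk, Finset.mem_filter, mem_t0, Nat.odd_iff, not_and] at hi
    simp only [DFunLike.coe] at hi
    obtain ⟨⟨b, hb, rfl⟩, h2⟩ := hi
    by_contra hle
    exact absurd (by omega) (h2 ⟨by omega, by omega⟩)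
  have hdvdE : (X : PowerSeries ℚ) ^ (n + 1) ∣ (1 - E) :=
    dvd_one_sub_of_coeff (coeff_prod_one_sub_big hbigE)
  have hbigW : ∀ k ≤ n, coeff (R := ℚ) k W = coeff (R := ℚ) k 1 := by
    intro k hk
    rw [hWdef]
    have := coeff_mul_prod_one_sub_of_lt_order k (range n) (1 : PowerSeries ℚ)
      (fun i => X ^ (n + i + 1)) (fun i hi => by
        rw [order_X_pow]
        exact_mod_cast by omega)
    simpa using this
  have hdvdW : (X : PowerSeries ℚ) ^ (n + 1) ∣ (1 - W) := dvd_one_sub_of_coeff hbigW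
  have key : 1 - D * P = (1 - W) + (D * P) * (E - 1) := by
    rw [hW3]; ring
  rw [key]
  have hdvdE' : (X : PowerSeries ℚ) ^ (n + 1) ∣ (E - 1) := by
    have := dvd_neg.mpr hdvdE
    simpa using this
  exact dvd_add hdvdW (Dvd.dvd.mul_left hdvdE' _)

lemma coeff_main (n : ℕ) :
    coeff (R := ℚ) n (∏ i ∈ fs1 n, sgf ℚ i) =
      coeff (R := ℚ) n (∏ i ∈ fs2 n, (if Odd i then 1 - (X : PowerSeries ℚ) ^ i else 1 + X ^ i)) := by
  set F : PowerSeries ℚ := ∏ i ∈ fs1 n, sgf ℚ i with hF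
  set G : PowerSeries ℚ := ∏ i ∈ fs2 n, (if Odd i then 1 - X ^ i else 1 + X ^ i) with hG
  set A : PowerSeries ℚ := ∏ i ∈ fs1 n, (1 + X ^ i) with hA
  have key : F - G = F * (1 - G * A) := by
    rw [mul_sub, mul_one, show F * (G * A) = G * (F * A) by ring, L7 n, mul_one]
  have hd : (X : PowerSeries ℚ) ^ (n + 1) ∣ (F - G) := by
    rw [key, hG, hA, L5 n]
    exact Dvd.dvd.mul_left (L6 n) F
  have h0 := PowerSeries.X_pow_dvd_iff.mp hd n (Nat.lt_succ_self n)
  rw [map_sub, sub_eq_zero] at h0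
  exact h0

end

theorem stmt0 (n : ℕ) :
    (b6e n : ℤ) - (b6o n : ℤ) = (-1) ^ n * (Q2 n : ℤ) := by
  have h : (b6e n : ℚ) - (b6o n : ℚ) = (-1) ^ n * (Q2 n : ℚ) := by
    rw [L1, coeff_main, ← L3]
  exact_mod_cast h
end

section
/- For every nonnegative integer n, the number of partitions of n into distinct parts not congruent to ±2 modulo 6 has the same parity as the number of 6-regular partitions of n. -/
open Finset

namespace PartitionParity

set_option linter.unusedSectionVars false

def M (n : ℕ) : Finset (Multiset ℕ) :=
  (Finset.univ : Finset (Nat.Partition n)).image Nat.Partition.parts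

lemma parts_injective (n : ℕ) :
    Function.Injective (Nat.Partition.parts (n := n)) :=
  fun _ _ h => Nat.Partition.ext h

lemma mem_M {n : ℕ} {A : Multiset ℕ} : A ∈ M n ↔ A.sum = n ∧ ∀ i ∈ A, 0 < i := by
  constructor
  · intro h
    simp only [M, Finset.mem_image] at h
    obtain ⟨P, -, rfl⟩ := h
    exact ⟨P.parts_sum, fun i hi => P.parts_pos hi⟩
  · rintro ⟨h1, h2⟩
    exact Finset.mem_image.2 ⟨⟨A, fun {i} hi => h2 i hi, h1⟩, Finset.mem_univ _, rfl⟩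

section

variable (Q : Multiset ℕ → Prop) [DecidablePred Q] (S T : ℕ → Prop)
  [DecidablePred S] [DecidablePred T]

def cM (n : ℕ) : Finset (Multiset ℕ) :=
  (M n).filter (fun A => Q A ∧ ∀ i ∈ A, S i)

lemma mem_cM {n : ℕ} {A : Multiset ℕ} :
    A ∈ cM Q S n ↔ A.sum = n ∧ (∀ i ∈ A, 0 < i) ∧ Q A ∧ ∀ i ∈ A, S i := by
  simp [cM, mem_M, and_assoc]

lemma card_cM (n : ℕ) :
    (cM Q S n).card
      = Fintype.card {P : Nat.Partition n // Q P.parts ∧ ∀ i ∈ P.parts, S i} := by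
  rw [Fintype.card_subtype]
  rw [cM, M, Finset.filter_image, Finset.card_image_of_injective _ (parts_injective n)]

lemma cM_congr (h : ∀ i, 0 < i → (S i ↔ T i)) (n : ℕ) : cM Q S n = cM Q T n := by
  ext A
  rw [mem_cM, mem_cM]
  constructor <;> rintro ⟨h1, h2, h3, h4⟩
  · exact ⟨h1, h2, h3, fun i hi => (h i (h2 i hi)).mp (h4 i hi)⟩
  · exact ⟨h1, h2, h3, fun i hi => (h i (h2 i hi)).mpr (h4 i hi)⟩

lemma cM_zero (hQ0 : Q 0) : cM Q S 0 = {0} := by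
  ext A
  rw [mem_cM, Finset.mem_singleton]
  constructor
  · rintro ⟨h1, h2, -, -⟩
    rw [Multiset.eq_zero_iff_forall_notMem]
    intro i hi
    have := h2 i hi
    have : i ≤ A.sum := by
      have := Multiset.cons_erase hi
      calc i ≤ i + (A.erase i).sum := Nat.le_add_right _ _
        _ = (i ::ₘ A.erase i).sum := (Multiset.sum_cons _ _).symm
        _ = A.sum := by rw [this]
    omega
  · rintro rfl
    exact ⟨rfl, by simp, hQ0, by simp⟩

lemma filter_key (hST : ∀ i, 0 < i → S i → T i → False)
    {A B : Multiset ℕ} (hA : ∀ i ∈ A, S i) (hB : ∀ i ∈ B, T i)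
    (hApos : ∀ i ∈ A, 0 < i) (hBpos : ∀ i ∈ B, 0 < i) :
    (A + B).filter S = A ∧ (A + B).filter (fun i => ¬ S i) = B := by
  constructor
  · rw [Multiset.filter_add, Multiset.filter_eq_self.2 hA,
      Multiset.filter_eq_nil.2 (fun i hi hSi => hST i (hBpos i hi) hSi (hB i hi)),
      add_zero]
  · have hBnS : ∀ i ∈ B, ¬ S i := fun i hi hSi => hST i (hBpos i hi) hSi (hB i hi)
    have hAnS : ∀ i ∈ A, ¬ ¬ S i := fun i hi h => h (hA i hi)
    rw [Multiset.filter_add, Multiset.filter_eq_nil.2 hAnS,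
      Multiset.filter_eq_self.2 hBnS, zero_add]

lemma cM_split (hST : ∀ i, 0 < i → S i → T i → False)
    (hQ : ∀ A B : Multiset ℕ, (∀ i ∈ A, S i) → (∀ i ∈ B, T i) →
      (∀ i ∈ A, 0 < i) → (∀ i ∈ B, 0 < i) → (Q (A + B) ↔ Q A ∧ Q B)) (n : ℕ) :
    (cM Q (fun i => S i ∨ T i) n).card
      = ∑ ab ∈ Finset.HasAntidiagonal.antidiagonal n, (cM Q S ab.1).card * (cM Q T ab.2).card := by
  rw [Finset.card_eq_sum_card_fiberwise
    (f := fun A : Multiset ℕ => ((A.filter S).sum, (A.filter (fun i => ¬ S i)).sum))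
    (t := Finset.HasAntidiagonal.antidiagonal n) ?maps]
  case maps =>
    intro A hA
    rw [Finset.mem_coe, mem_cM] at hA
    rw [Finset.mem_coe, Finset.HasAntidiagonal.mem_antidiagonal, Multiset.sum_filter_add_sum_filter_not]
    exact hA.1
  refine Finset.sum_congr rfl ?_
  rintro ⟨a, b⟩ hab
  rw [Finset.HasAntidiagonal.mem_antidiagonal] at hab
  rw [← Finset.card_product]
  refine Finset.card_nbij' (fun A => (A.filter S, A.filter (fun i => ¬ S i)))
    (fun AB => AB.1 + AB.2) ?_ ?_ ?_ ?_
  · intro A hA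
    rw [Finset.mem_coe, Finset.mem_filter] at hA
    obtain ⟨hA, hf⟩ := hA
    rw [mem_cM] at hA
    obtain ⟨hsum, hpos, hQA, hsST⟩ := hA
    have hfS : ∀ i ∈ A.filter S, S i := fun i hi => (Multiset.mem_filter.1 hi).2
    have hfT : ∀ i ∈ A.filter (fun i => ¬ S i), T i := by
      intro i hi
      rw [Multiset.mem_filter] at hi
      exact (hsST i hi.1).resolve_left hi.2
    have hQsplit := hQ _ _ hfS hfT
      (fun i hi => hpos i (Multiset.mem_of_mem_filter hi))
      (fun i hi => hpos i (Multiset.mem_of_mem_filter hi))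
    rw [Multiset.filter_add_not] at hQsplit
    have hQQ := hQsplit.1 hQA
    simp only [Prod.mk.injEq] at hf
    rw [Finset.mem_coe, Finset.mem_product]
    constructor
    · rw [mem_cM]
      exact ⟨hf.1, fun i hi => hpos i (Multiset.mem_of_mem_filter hi), hQQ.1, hfS⟩
    · rw [mem_cM]
      exact ⟨hf.2, fun i hi => hpos i (Multiset.mem_of_mem_filter hi), hQQ.2, hfT⟩
  · rintro ⟨A, B⟩ hAB
    rw [Finset.mem_coe, Finset.mem_product, mem_cM, mem_cM] at hAB
    obtain ⟨⟨hsA, hposA, hQA, hSA⟩, hsB, hposB, hQB, hTB⟩ := hAB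
    obtain ⟨key1, key2⟩ := filter_key S T hST hSA hTB hposA hposB
    rw [Finset.mem_coe, Finset.mem_filter, mem_cM]
    refine ⟨⟨?_, ?_, ?_, ?_⟩, ?_⟩
    · rw [Multiset.sum_add, hsA, hsB, hab]
    · intro i hi
      rcases Multiset.mem_add.1 hi with h | h
      · exact hposA i h
      · exact hposB i h
    · exact (hQ A B hSA hTB hposA hposB).2 ⟨hQA, hQB⟩
    · intro i hi
      rcases Multiset.mem_add.1 hi with h | h
      · exact Or.inl (hSA i h)
      · exact Or.inr (hTB i h)
    · rw [key1, key2, hsA, hsB]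
  · intro A _
    exact Multiset.filter_add_not _ _
  · rintro ⟨A, B⟩ hAB
    rw [Finset.mem_coe, Finset.mem_product, mem_cM, mem_cM] at hAB
    obtain ⟨⟨hsA, hposA, hQA, hSA⟩, hsB, hposB, hQB, hTB⟩ := hAB
    obtain ⟨key1, key2⟩ := filter_key S T hST hSA hTB hposA hposB
    simp only [Prod.mk.injEq]
    exact ⟨key1, key2⟩

end


abbrev NOD : Multiset ℕ → Prop := Multiset.Nodup
abbrev TRU : Multiset ℕ → Prop := fun _ => True

lemma nodup_split (S T : ℕ → Prop) (hST : ∀ i, 0 < i → S i → T i → False) :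
    ∀ A B : Multiset ℕ, (∀ i ∈ A, S i) → (∀ i ∈ B, T i) →
      (∀ i ∈ A, 0 < i) → (∀ i ∈ B, 0 < i) → (NOD (A + B) ↔ NOD A ∧ NOD B) := by
  intro A B hA hB hpA hpB
  rw [NOD, Multiset.nodup_add]
  have hd : Disjoint A B :=
    Multiset.disjoint_left.2 (fun {a} ha hb => hST a (hpA a ha) (hA a ha) (hB a hb))
  tauto

lemma tru_split (S T : ℕ → Prop) :
    ∀ A B : Multiset ℕ, (∀ i ∈ A, S i) → (∀ i ∈ B, T i) →
      (∀ i ∈ A, 0 < i) → (∀ i ∈ B, 0 < i) → (TRU (A + B) ↔ TRU A ∧ TRU B) := by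
  intro A B _ _ _ _
  simp [TRU]

lemma half_sum {A : Multiset ℕ} (h : ∀ i ∈ A, i % 2 = 0) :
    (A.map (fun i => i / 2)).sum = A.sum / 2 := by
  induction A using Multiset.induction_on with
  | empty => simp
  | cons a A ih =>
    simp only [Multiset.map_cons, Multiset.sum_cons]
    rw [ih (fun i hi => h i (Multiset.mem_cons_of_mem hi))]
    have ha := h a (Multiset.mem_cons_self a A)
    omega

lemma dc_even (n : ℕ) :
    (cM NOD (fun i => i % 2 = 0) n).card
      = if n % 2 = 0 then (cM NOD (fun _ => True) (n / 2)).card else 0 := by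
  split_ifs with hn
  · refine Finset.card_nbij' (fun A => A.map (fun i => i / 2))
      (fun B => B.map (fun i => 2 * i)) ?_ ?_ ?_ ?_
    · intro A hA
      rw [Finset.mem_coe, mem_cM] at hA ⊢
      obtain ⟨hs, hpos, hnd, hev⟩ := hA
      refine ⟨by rw [half_sum hev, hs], ?_, ?_, fun i _ => trivial⟩
      · intro i hi
        obtain ⟨a, ha, rfl⟩ := Multiset.mem_map.1 hi
        have := hpos a ha; have := hev a ha; omega
      · refine hnd.map_on ?_
        intro x hx y hy hxy
        have := hev x hx; have := hev y hy; omega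
    · intro B hB
      rw [Finset.mem_coe, mem_cM] at hB ⊢
      obtain ⟨hs, hpos, hnd, -⟩ := hB
      refine ⟨?_, ?_, ?_, ?_⟩
      · have : (B.map (fun i => 2 * i)).sum = 2 * B.sum := by
          rw [show B.sum = (B.map id).sum by rw [Multiset.map_id]]
          exact Multiset.sum_map_mul_left
        rw [this, hs]
        omega
      · intro i hi
        obtain ⟨a, ha, rfl⟩ := Multiset.mem_map.1 hi
        have := hpos a ha; omega
      · exact hnd.map (fun x y hxy => by omega)
      · intro i hi
        obtain ⟨a, ha, rfl⟩ := Multiset.mem_map.1 hi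
        omega
    · intro A hA
      rw [Finset.mem_coe, mem_cM] at hA
      show Multiset.map (fun i => 2 * i) (Multiset.map (fun i => i / 2) A) = A
      have hc : Multiset.map ((fun i => 2 * i) ∘ (fun i => i / 2)) A = Multiset.map id A :=
        Multiset.map_congr rfl (fun x hx => by have := hA.2.2.2 x hx; simp; omega)
      rw [Multiset.map_map, hc, Multiset.map_id]
    · intro B _
      show Multiset.map (fun i => i / 2) (Multiset.map (fun i => 2 * i) B) = B
      have hc : Multiset.map ((fun i => i / 2) ∘ (fun i => 2 * i)) B = Multiset.map id B :=
        Multiset.map_congr rfl (fun x _ => by simp)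
      rw [Multiset.map_map, hc, Multiset.map_id]
  · rw [Finset.card_eq_zero, Finset.eq_empty_iff_forall_notMem]
    intro A hA
    rw [mem_cM] at hA
    obtain ⟨hs, -, -, hev⟩ := hA
    have : (2:ℕ) ∣ A.sum :=
      Multiset.dvd_sum (fun i hi => Nat.dvd_of_mod_eq_zero (hev i hi))
    omega

/-! ### The involution -/

def mn (U : Multiset ℕ) : ℕ :=
  if h : U = 0 then 0 else U.toFinset.min' (Multiset.toFinset_nonempty.2 h)

lemma mn_mem {U : Multiset ℕ} (h : U ≠ 0) : mn U ∈ U := by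
  rw [mn, dif_neg h]
  exact Multiset.mem_toFinset.1 (Finset.min'_mem _ _)

def move (AB : Multiset ℕ × Multiset ℕ) : Multiset ℕ × Multiset ℕ :=
  if mn (AB.1 + AB.2) ∈ AB.1 then
    (AB.1.erase (mn (AB.1 + AB.2)), mn (AB.1 + AB.2) ::ₘ AB.2)
  else (mn (AB.1 + AB.2) ::ₘ AB.1, AB.2.erase (mn (AB.1 + AB.2)))

lemma erase_add_cons {s : ℕ} {A B : Multiset ℕ} (h : s ∈ A) :
    A.erase s + (s ::ₘ B) = A + B := by
  rw [← Multiset.singleton_add, ← add_assoc, add_comm (A.erase s) {s},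
    Multiset.singleton_add, Multiset.cons_erase h]

lemma move_involutive {A B : Multiset ℕ} (hnd : A.Nodup) (h0 : A + B ≠ 0) :
    move (move (A, B)) = (A, B) := by
  by_cases hs : mn (A + B) ∈ A
  · have h1 : move (A, B) = (A.erase (mn (A + B)), mn (A + B) ::ₘ B) := if_pos hs
    have hu : A.erase (mn (A + B)) + (mn (A + B) ::ₘ B) = A + B := erase_add_cons hs
    rw [h1, move]
    simp only [hu]
    rw [if_neg hnd.notMem_erase, Multiset.cons_erase hs, Multiset.erase_cons_head]
  · have hsB : mn (A + B) ∈ B := (Multiset.mem_add.1 (mn_mem h0)).resolve_left hs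
    have h1 : move (A, B) = (mn (A + B) ::ₘ A, B.erase (mn (A + B))) := if_neg hs
    have hu : (mn (A + B) ::ₘ A) + B.erase (mn (A + B)) = A + B := by
      rw [add_comm, erase_add_cons hsB, add_comm]
    rw [h1, move]
    simp only [hu]
    rw [if_pos (Multiset.mem_cons_self _ _), Multiset.erase_cons_head,
      Multiset.cons_erase hsB]

lemma inv_sum (S : ℕ → Prop) [DecidablePred S] {n : ℕ} (hn : 0 < n) :
    (∑ ab ∈ Finset.HasAntidiagonal.antidiagonal n,
      (cM NOD S ab.1).card * (cM TRU S ab.2).card) % 2 = 0 := by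
  classical
  set FF : Finset (Multiset ℕ × Multiset ℕ) :=
    (Finset.HasAntidiagonal.antidiagonal n).biUnion (fun ab => cM NOD S ab.1 ×ˢ cM TRU S ab.2) with hFF
  have hmem : ∀ A B : Multiset ℕ, (A, B) ∈ FF ↔
      A ∈ cM NOD S A.sum ∧ B ∈ cM TRU S B.sum ∧ A.sum + B.sum = n := by
    intro A B
    simp only [hFF, Finset.mem_biUnion, Finset.mem_product, Finset.HasAntidiagonal.mem_antidiagonal,
      Prod.exists]
    constructor
    · rintro ⟨a, b, hab, hA, hB⟩
      have ha : A.sum = a := (mem_cM _ _ |>.1 hA).1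
      have hb : B.sum = b := (mem_cM _ _ |>.1 hB).1
      subst ha; subst hb
      exact ⟨hA, hB, hab⟩
    · rintro ⟨hA, hB, hab⟩
      exact ⟨A.sum, B.sum, hab, hA, hB⟩
  have hcard : (∑ ab ∈ Finset.HasAntidiagonal.antidiagonal n,
      (cM NOD S ab.1).card * (cM TRU S ab.2).card) = FF.card := by
    rw [hFF, Finset.card_biUnion]
    · exact Finset.sum_congr rfl (fun ab _ => (Finset.card_product _ _).symm)
    · rintro ⟨a, b⟩ hab ⟨c, d⟩ hcd hne
      rw [Function.onFun, Finset.disjoint_left]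
      rintro ⟨A, B⟩ h1 h2
      rw [Finset.mem_product] at h1 h2
      have e1 : A.sum = a := (mem_cM _ _ |>.1 h1.1).1
      have e2 : B.sum = b := (mem_cM _ _ |>.1 h1.2).1
      have e3 : A.sum = c := (mem_cM _ _ |>.1 h2.1).1
      have e4 : B.sum = d := (mem_cM _ _ |>.1 h2.2).1
      apply hne
      simp only [Prod.mk.injEq]
      omega
  rw [hcard]
  -- now show FF.card is even via the involution `move`
  have hU0 : ∀ A B : Multiset ℕ, (A, B) ∈ FF → A + B ≠ 0 := by
    intro A B hABm hU
    rw [hmem] at hABm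
    have : (A + B).sum = n := by rw [Multiset.sum_add]; exact hABm.2.2
    rw [hU] at this
    simp at this
    omega
  have hmove_mem : ∀ AB ∈ FF, move AB ∈ FF := by
    rintro ⟨A, B⟩ hABm
    have hU := hU0 _ _ hABm
    rw [hmem] at hABm
    obtain ⟨hA, hB, hab⟩ := hABm
    rw [mem_cM] at hA hB
    obtain ⟨-, hposA, hndA, hSA⟩ := hA
    obtain ⟨-, hposB, -, hSB⟩ := hB
    have hsmem := mn_mem hU
    by_cases hs : mn (A + B) ∈ A
    · have h1 : move (A, B) = (A.erase (mn (A + B)), mn (A + B) ::ₘ B) := if_pos hs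
      rw [h1, hmem]
      have hesum : (A.erase (mn (A + B))).sum + mn (A + B) = A.sum := by
        have := congrArg Multiset.sum (Multiset.cons_erase hs)
        rw [Multiset.sum_cons] at this
        omega
      refine ⟨?_, ?_, ?_⟩
      · rw [mem_cM]
        exact ⟨rfl, fun i hi => hposA i (Multiset.mem_of_mem_erase hi), hndA.erase _,
          fun i hi => hSA i (Multiset.mem_of_mem_erase hi)⟩
      · rw [mem_cM]
        refine ⟨rfl, ?_, trivial, ?_⟩
        · intro i hi
          rcases Multiset.mem_cons.1 hi with rfl | h
          · exact hposA _ hs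
          · exact hposB i h
        · intro i hi
          rcases Multiset.mem_cons.1 hi with rfl | h
          · exact hSA _ hs
          · exact hSB i h
      · simp only [Multiset.sum_cons]
        omega
    · have hsB : mn (A + B) ∈ B := (Multiset.mem_add.1 hsmem).resolve_left hs
      have h1 : move (A, B) = (mn (A + B) ::ₘ A, B.erase (mn (A + B))) := if_neg hs
      rw [h1, hmem]
      have hesum : (B.erase (mn (A + B))).sum + mn (A + B) = B.sum := by
        have := congrArg Multiset.sum (Multiset.cons_erase hsB)
        rw [Multiset.sum_cons] at this
        omega
      refine ⟨?_, ?_, ?_⟩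
      · rw [mem_cM]
        refine ⟨rfl, ?_, Multiset.nodup_cons.2 ⟨hs, hndA⟩, ?_⟩
        · intro i hi
          rcases Multiset.mem_cons.1 hi with rfl | h
          · exact hposB _ hsB
          · exact hposA i h
        · intro i hi
          rcases Multiset.mem_cons.1 hi with rfl | h
          · exact hSB _ hsB
          · exact hSA i h
      · rw [mem_cM]
        exact ⟨rfl, fun i hi => hposB i (Multiset.mem_of_mem_erase hi), trivial,
          fun i hi => hSB i (Multiset.mem_of_mem_erase hi)⟩
      · simp only [Multiset.sum_cons]
        omega
  have hzero : (∑ _AB ∈ FF, (1 : ZMod 2)) = 0 := by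
    refine Finset.sum_involution (fun AB _ => move AB) (fun AB _ => by decide)
      ?_ hmove_mem ?_
    · rintro ⟨A, B⟩ hABm -
      have hU := hU0 _ _ hABm
      intro heq
      replace heq : move (A, B) = (A, B) := heq
      have hnd : A.Nodup := by
        rw [hmem, mem_cM] at hABm
        exact hABm.1.2.2.1
      by_cases hs : mn (A + B) ∈ A
      · have h1 : move (A, B) = (A.erase (mn (A + B)), mn (A + B) ::ₘ B) := if_pos hs
        rw [h1] at heq
        have h2 : A.erase (mn (A + B)) = A := congrArg Prod.fst heq
        have := hnd.notMem_erase (a := mn (A + B))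
        rw [h2] at this
        exact this hs
      · have h1 : move (A, B) = (mn (A + B) ::ₘ A, B.erase (mn (A + B))) := if_neg hs
        rw [h1] at heq
        have := congrArg (fun p => Multiset.card p.1) heq
        simp only [Multiset.card_cons] at this
        omega
    · rintro ⟨A, B⟩ hABm
      have hU := hU0 _ _ hABm
      have hnd : A.Nodup := by
        rw [hmem, mem_cM] at hABm
        exact hABm.1.2.2.1
      exact move_involutive hnd hU
  rw [Finset.sum_const, nsmul_eq_mul, mul_one] at hzero
  have : (2:ℕ) ∣ FF.card := by
    rwa [ZMod.natCast_eq_zero_iff] at hzero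
  omega


/-! ### Power series assembly -/

def F (f : ℕ → ℕ) : PowerSeries (ZMod 2) := PowerSeries.mk fun n => (f n : ZMod 2)

lemma coeff_F (f : ℕ → ℕ) (n : ℕ) :
    (PowerSeries.coeff n) (F f) = (f n : ZMod 2) :=
  PowerSeries.coeff_mk _ _

lemma F_mul (f g h : ℕ → ℕ)
    (hfgh : ∀ n, f n = ∑ ab ∈ Finset.HasAntidiagonal.antidiagonal n, g ab.1 * h ab.2) :
    F f = F g * F h := by
  ext n
  rw [PowerSeries.coeff_mul, coeff_F, hfgh]
  push_cast
  exact Finset.sum_congr rfl (fun ab _ => by rw [coeff_F, coeff_F])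

lemma card_cM_zero (Q : Multiset ℕ → Prop) [DecidablePred Q] (S : ℕ → Prop)
    [DecidablePred S] (hQ0 : Q 0) : (cM Q S 0).card = 1 := by
  rw [cM_zero Q S hQ0, Finset.card_singleton]

lemma F_inv (S : ℕ → Prop) [DecidablePred S] :
    F (fun n => (cM NOD S n).card) * F (fun n => (cM TRU S n).card) = 1 := by
  ext n
  rw [PowerSeries.coeff_mul, PowerSeries.coeff_one]
  rcases Nat.eq_zero_or_pos n with rfl | hn
  · rw [if_pos rfl, Finset.Nat.antidiagonal_zero, Finset.sum_singleton, coeff_F, coeff_F]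
    rw [card_cM_zero NOD S Multiset.nodup_zero, card_cM_zero TRU S trivial]
    norm_num
  · rw [if_neg (by omega)]
    have h2 := inv_sum S hn
    have hcast : ((∑ ab ∈ Finset.HasAntidiagonal.antidiagonal n,
        (cM NOD S ab.1).card * (cM TRU S ab.2).card : ℕ) : ZMod 2)
        = ∑ ab ∈ Finset.HasAntidiagonal.antidiagonal n,
            (PowerSeries.coeff ab.1) (F (fun n => (cM NOD S n).card))
              * (PowerSeries.coeff ab.2) (F (fun n => (cM TRU S n).card)) := by
      push_cast
      exact Finset.sum_congr rfl (fun ab _ => by rw [coeff_F, coeff_F])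
    rw [← hcast]
    rw [ZMod.natCast_eq_zero_iff]
    exact Nat.dvd_of_mod_eq_zero h2

lemma coeff_sq (f : PowerSeries (ZMod 2)) (n : ℕ) :
    (PowerSeries.coeff n) (f * f)
      = if n % 2 = 0 then (PowerSeries.coeff (n / 2)) f else 0 := by
  rw [PowerSeries.coeff_mul]
  rw [← Finset.sum_filter_add_sum_filter_not (Finset.HasAntidiagonal.antidiagonal n)
    (fun ab => ab.1 = ab.2)]
  have hoff : (∑ ab ∈ (Finset.HasAntidiagonal.antidiagonal n).filter (fun ab => ¬ ab.1 = ab.2),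
      (PowerSeries.coeff ab.1) f * (PowerSeries.coeff ab.2) f) = 0 := by
    refine Finset.sum_involution (fun ab _ => ab.swap) ?_ ?_ ?_ ?_
    · intro ab _
      rw [Prod.fst_swap, Prod.snd_swap, mul_comm]
      have hx : ∀ x : ZMod 2, x + x = 0 := by decide
      exact hx _
    · intro ab hab _
      rw [Finset.mem_filter] at hab
      intro hswap
      apply hab.2
      have := congrArg Prod.fst hswap
      rw [Prod.fst_swap] at this
      exact this.symm
    · intro ab hab
      rw [Finset.mem_filter, Finset.HasAntidiagonal.mem_antidiagonal] at hab
      rw [Finset.mem_filter, Finset.HasAntidiagonal.mem_antidiagonal, Prod.fst_swap, Prod.snd_swap]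
      exact ⟨by rw [add_comm]; exact hab.1, fun h => hab.2 h.symm⟩
    · intro ab _
      exact Prod.swap_swap ab
  rw [hoff, add_zero]
  have hdiag : (Finset.HasAntidiagonal.antidiagonal n).filter (fun ab => ab.1 = ab.2)
      = if n % 2 = 0 then ({(n / 2, n / 2)} : Finset (ℕ × ℕ)) else ∅ := by
    split_ifs with h
    · ext ⟨a, b⟩
      simp only [Finset.mem_filter, Finset.HasAntidiagonal.mem_antidiagonal, Finset.mem_singleton,
        Prod.mk.injEq]
      omega
    · ext ⟨a, b⟩
      simp only [Finset.mem_filter, Finset.HasAntidiagonal.mem_antidiagonal, Finset.notMem_empty,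
        iff_false, not_and]
      omega
  rw [hdiag]
  split_ifs with h
  · rw [Finset.sum_singleton]
    have hx : ∀ x : ZMod 2, x * x = x := by decide
    exact hx _
  · exact Finset.sum_empty

theorem key (n : ℕ) :
    (cM NOD (fun i => i % 6 ≠ 2 ∧ i % 6 ≠ 4) n).card % 2
      = (cM TRU (fun i => ¬ (6 ∣ i)) n).card % 2 := by
  have hsplit1 : F (fun m => (cM NOD (fun i => i % 6 ≠ 2 ∧ i % 6 ≠ 4) m).card)
      = F (fun m => (cM NOD (fun i => 6 ∣ i) m).card)
        * F (fun m => (cM NOD (fun i => i % 2 = 1) m).card) := by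
    apply F_mul
    intro m
    rw [cM_congr NOD (fun i => i % 6 ≠ 2 ∧ i % 6 ≠ 4) (fun i => 6 ∣ i ∨ i % 2 = 1)
      (fun i hi => by omega) m]
    exact cM_split NOD (fun i => 6 ∣ i) (fun i => i % 2 = 1)
      (fun i h1 h2 h3 => by omega)
      (nodup_split _ _ (fun i h1 h2 h3 => by omega)) m
  have hsplit2 : F (fun m => (cM TRU (fun _ : ℕ => True) m).card)
      = F (fun m => (cM TRU (fun i => 6 ∣ i) m).card)
        * F (fun m => (cM TRU (fun i => ¬ (6 ∣ i)) m).card) := by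
    apply F_mul
    intro m
    rw [cM_congr TRU (fun _ : ℕ => True) (fun i => 6 ∣ i ∨ ¬ (6 ∣ i))
      (fun i hi => by tauto) m]
    exact cM_split TRU (fun i => 6 ∣ i) (fun i => ¬ (6 ∣ i))
      (fun i h1 h2 h3 => h3 h2) (tru_split _ _) m
  have hsplit3 : F (fun m => (cM NOD (fun _ : ℕ => True) m).card)
      = F (fun m => (cM NOD (fun i => i % 2 = 1) m).card)
        * F (fun m => (cM NOD (fun i => i % 2 = 0) m).card) := by
    apply F_mul
    intro m
    rw [cM_congr NOD (fun _ : ℕ => True) (fun i => i % 2 = 1 ∨ i % 2 = 0)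
      (fun i hi => by simp only [true_iff]; omega) m]
    exact cM_split NOD (fun i => i % 2 = 1) (fun i => i % 2 = 0)
      (fun i h1 h2 h3 => by omega)
      (nodup_split _ _ (fun i h1 h2 h3 => by omega)) m
  have heven : F (fun m => (cM NOD (fun i => i % 2 = 0) m).card)
      = F (fun m => (cM NOD (fun _ : ℕ => True) m).card)
        * F (fun m => (cM NOD (fun _ : ℕ => True) m).card) := by
    ext m
    rw [coeff_F, coeff_sq, dc_even]
    split_ifs with h
    · rw [coeff_F]
    · rw [Nat.cast_zero]
  have hinv6 := F_inv (fun i => 6 ∣ i)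
  have hinvT := F_inv (fun _ : ℕ => True)
  set A := F (fun m => (cM NOD (fun _ : ℕ => True) m).card) with hA
  set O := F (fun m => (cM NOD (fun i => i % 2 = 1) m).card) with hO
  set P := F (fun m => (cM TRU (fun _ : ℕ => True) m).card) with hP
  have e2 : A = O * (A * A) := hsplit3.trans (by rw [heven])
  have hA0 : PowerSeries.constantCoeff A ≠ 0 := by
    have hc : PowerSeries.constantCoeff A
        = ((cM NOD (fun _ : ℕ => True) 0).card : ZMod 2) := by
      rw [hA, ← PowerSeries.coeff_zero_eq_constantCoeff, coeff_F]
    rw [hc, card_cM_zero NOD _ Multiset.nodup_zero]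
    exact one_ne_zero
  have hAne : A ≠ 0 := fun h => hA0 (by rw [h]; simp)
  have hO0 : PowerSeries.constantCoeff O = 1 := by
    rw [hO, ← PowerSeries.coeff_zero_eq_constantCoeff, coeff_F,
      card_cM_zero NOD _ Multiset.nodup_zero, Nat.cast_one]
  have hh : A * O = 1 := by
    have hsq : A * O = (A * O) * (A * O) := by
      calc A * O = (O * (A * A)) * O := by conv_lhs => rw [e2]
        _ = (A * O) * (A * O) := by ring
    have hx0 : PowerSeries.constantCoeff (A * O) ≠ 0 := by
      rw [map_mul, hO0, mul_one]
      exact hA0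
    have hz : (A * O) * ((A * O) - 1) = 0 := by
      rw [mul_sub, ← hsq, mul_one, sub_self]
    rcases mul_eq_zero.1 hz with h | h
    · exact absurd (by rw [h]; simp) hx0
    · rwa [sub_eq_zero] at h
  have hOP : O = P := by
    have h2 : A * P = 1 := hinvT
    exact mul_left_cancel₀ hAne (hh.trans h2.symm)
  have hfin : F (fun m => (cM NOD (fun i => i % 6 ≠ 2 ∧ i % 6 ≠ 4) m).card)
      = F (fun m => (cM TRU (fun i => ¬ (6 ∣ i)) m).card) := by
    calc F (fun m => (cM NOD (fun i => i % 6 ≠ 2 ∧ i % 6 ≠ 4) m).card)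
        = F (fun m => (cM NOD (fun i => 6 ∣ i) m).card) * O := hsplit1
      _ = F (fun m => (cM NOD (fun i => 6 ∣ i) m).card) * P := by rw [hOP]
      _ = F (fun m => (cM NOD (fun i => 6 ∣ i) m).card)
            * (F (fun m => (cM TRU (fun i => 6 ∣ i) m).card)
              * F (fun m => (cM TRU (fun i => ¬ (6 ∣ i)) m).card)) := by rw [← hsplit2]
      _ = (F (fun m => (cM NOD (fun i => 6 ∣ i) m).card)
            * F (fun m => (cM TRU (fun i => 6 ∣ i) m).card))
            * F (fun m => (cM TRU (fun i => ¬ (6 ∣ i)) m).card) := by ring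
      _ = 1 * F (fun m => (cM TRU (fun i => ¬ (6 ∣ i)) m).card) := by rw [hinv6]
      _ = F (fun m => (cM TRU (fun i => ¬ (6 ∣ i)) m).card) := one_mul _
  have hco := congrArg (PowerSeries.coeff n) hfin
  rw [coeff_F, coeff_F] at hco
  exact (ZMod.natCast_eq_natCast_iff _ _ _).1 hco

end PartitionParity

/-- Number of 6-regular partitions of `n` (no part divisible by 6). -/
def b6 (n : ℕ) : ℕ := Fintype.card {P : Nat.Partition n // ∀ i ∈ P.parts, ¬ (6 ∣ i)}

theorem stmt1 (n : ℕ) : Q2 n % 2 = b6 n % 2 := by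
  have hq : Q2 n = (PartitionParity.cM PartitionParity.NOD
      (fun i => i % 6 ≠ 2 ∧ i % 6 ≠ 4) n).card := by
    rw [Q2, PartitionParity.card_cM]
  have hb : b6 n = (PartitionParity.cM PartitionParity.TRU
      (fun i => ¬ (6 ∣ i)) n).card := by
    rw [b6, PartitionParity.card_cM]
    exact Fintype.card_congr
      (Equiv.subtypeEquivRight (fun P => ⟨fun h => ⟨trivial, h⟩, fun h => h.2⟩))
  rw [hq, hb]
  exact PartitionParity.key n
end

section
/- For every nonnegative integer n, b_6(n) = Σ_{j ∈ ℤ} (-1)^j p(n - 3j(3j-1)), where p(x) = 0 when x is negative. -/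
open Finset

/-- Euler's partition function. -/
def pnat (n : ℕ) : ℕ := Fintype.card (Nat.Partition n)

/-- `p` extended to integers, `0` on negatives. -/
def pz (x : ℤ) : ℤ := if 0 ≤ x then pnat x.toNat else 0

def pentz (j : ℤ) : ℤ := j * (3 * j - 1) / 2
def b6z (x : ℤ) : ℤ := if 0 ≤ x then b6 x.toNat else 0
def parts (m : ℕ) : Finset (Multiset ℕ) := Finset.univ.image (Nat.Partition.parts (n := m))

lemma two_pentz (j : ℤ) : 2 * pentz j = j * (3 * j - 1) := by
  apply Int.mul_ediv_cancel'
  rcases Int.even_or_odd j with ⟨c, hc⟩ | ⟨c, hc⟩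
  · exact ⟨c * (3 * j - 1), by rw [hc]; ring⟩
  · exact ⟨j * (3 * c + 1), by rw [hc]; ring⟩

lemma pentz_succ (j : ℤ) : pentz (j + 1) = pentz j + 3 * j + 1 := by
  have h1 := two_pentz j; have h2 := two_pentz (j + 1)
  have : 2 * pentz (j+1) = 2 * pentz j + 6 * j + 2 := by rw [h1, h2]; ring
  omega

lemma natAbs_le_pentz (j : ℤ) : (j.natAbs : ℤ) ≤ pentz j := by
  have h := two_pentz j
  rcases le_or_gt 0 j with hj | hj
  · rw [Int.natAbs_of_nonneg hj]
    rcases eq_or_lt_of_le hj with h0 | h0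
    · simp [← h0] at h ⊢; omega
    · nlinarith
  · rw [Int.ofNat_natAbs_of_nonpos hj.le]; nlinarith

lemma pentz_nonneg (j : ℤ) : 0 ≤ pentz j := le_trans (by positivity) (natAbs_le_pentz j)

lemma pentz_eq_zero {j : ℤ} (h : pentz j = 0) : j = 0 := by
  have := natAbs_le_pentz j; omega

lemma mem_parts {m : ℕ} {M : Multiset ℕ} :
    M ∈ parts m ↔ M.sum = m ∧ ∀ i ∈ M, 0 < i := by
  constructor
  · rintro h
    simp only [parts, mem_image, mem_univ, true_and] at h
    obtain ⟨P, rfl⟩ := h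
    exact ⟨P.parts_sum, fun i hi => P.parts_pos hi⟩
  · rintro ⟨h1, h2⟩
    simp only [parts, mem_image, mem_univ, true_and]
    exact ⟨⟨M, fun {i} hi => h2 i hi, h1⟩, rfl⟩

lemma card_parts (m : ℕ) : (parts m).card = pnat m := by
  rw [parts, Finset.card_image_of_injective _ (fun P Q h => Nat.Partition.ext h)]
  rfl

lemma pnat_zero : pnat 0 = 1 := by
  rw [pnat]; exact Fintype.card_unique

lemma sign_succ (j : ℤ) : ((-1 : ℤ) ^ (j + 1).natAbs) = -(-1) ^ j.natAbs := by
  rcases Int.even_or_odd j with hj | hj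
  · rw [Int.natAbs_even.2 hj |>.neg_one_pow,
      (Int.natAbs_odd.2 (hj.add_one)).neg_one_pow]
  · rw [(Int.natAbs_odd.2 hj).neg_one_pow,
      (Int.natAbs_even.2 (by simpa using hj.add_one)).neg_one_pow]; ring

def parts6 (x : ℕ) : Finset (Multiset ℕ) := (parts x).filter (fun M => ∀ i ∈ M, ¬ 6 ∣ i)

lemma card_parts6 (x : ℕ) : (parts6 x).card = b6 x := by
  have hinj : Function.Injective (Nat.Partition.parts (n := x)) := fun P Q h => Nat.Partition.ext h
  rw [parts6, parts, Finset.filter_image,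
    Finset.card_image_of_injective _ hinj, b6, Fintype.card_subtype]

lemma sum_map_mul6 (μ : Multiset ℕ) : (μ.map (6 * ·)).sum = 6 * μ.sum := by
  induction μ using Multiset.induction with
  | empty => simp
  | cons a s ih => simp [ih]; ring

lemma map_div_mul {B : Multiset ℕ} (h : ∀ x ∈ B, 6 ∣ x) :
    (B.map (· / 6)).map (6 * ·) = B := by
  rw [Multiset.map_map]
  refine (Multiset.map_congr rfl ?_).trans (Multiset.map_id _)
  intro x hx
  have := h x hx
  simp only [Function.comp_apply, id]
  omega

lemma conv (a : ℕ) :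
    (pnat a : ℤ) = ∑ m ∈ range (a + 1), b6z ((a : ℤ) - 6 * m) * pnat m := by
  classical
  have hf : ∀ M ∈ parts a, (M.filter (6 ∣ ·)).sum / 6 ∈ range (a + 1) := by
    intro M hM
    rw [mem_parts] at hM
    obtain ⟨u, hu⟩ := Multiset.le_iff_exists_add.1 (Multiset.filter_le (6 ∣ ·) M)
    have : M.sum = (M.filter (6 ∣ ·)).sum + u.sum := by rw [← Multiset.sum_add, ← hu]
    rw [mem_range]
    omega
  have hcard := Finset.card_eq_sum_card_fiberwise hf
  have key : ∀ m ∈ range (a + 1),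
      (((parts a).filter (fun M => (M.filter (6 ∣ ·)).sum / 6 = m)).card : ℤ)
        = b6z ((a : ℤ) - 6 * m) * pnat m := by
    intro m _
    have hfib : (parts a).filter (fun M => (M.filter (6 ∣ ·)).sum / 6 = m)
        = (parts a).filter (fun M => (M.filter (6 ∣ ·)).sum = 6 * m) := by
      apply Finset.filter_congr
      intro M _
      have hdvd : 6 ∣ (M.filter (6 ∣ ·)).sum :=
        Multiset.dvd_sum (fun x hx => (Multiset.mem_filter.1 hx).2)
      constructor
      · intro h; omega
      · intro h; omega
    rw [hfib]
    by_cases hm : 6 * m ≤ a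
    · have hbij : ((parts a).filter (fun M => (M.filter (6 ∣ ·)).sum = 6 * m)).card
          = ((parts6 (a - 6 * m)) ×ˢ (parts m)).card := by
        apply Finset.card_nbij'
          (fun M => (M.filter (fun i => ¬ 6 ∣ i), (M.filter (6 ∣ ·)).map (· / 6)))
          (fun p => p.1 + p.2.map (6 * ·))
        · -- hi : forward mem
          intro M hM
          simp only [Finset.mem_coe] at hM ⊢
          rw [Finset.mem_filter, mem_parts] at hM
          obtain ⟨⟨hsum, hpos⟩, hfs⟩ := hM
          rw [Finset.mem_product]
          dsimp only
          constructor
          · rw [parts6, Finset.mem_filter, mem_parts]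
            refine ⟨⟨?_, fun i hi => hpos i (Multiset.mem_of_mem_filter hi)⟩,
              fun i hi => (Multiset.mem_filter.1 hi).2⟩
            have h2 : (M.filter (fun i => ¬ 6 ∣ i)).sum + (M.filter (6 ∣ ·)).sum = a := by
              rw [add_comm, ← Multiset.sum_add, Multiset.filter_add_not, hsum]
            omega
          · rw [mem_parts]
            constructor
            · have h7 := sum_map_mul6 ((M.filter (6 ∣ ·)).map (· / 6))
              rw [map_div_mul (fun x hx => (Multiset.mem_filter.1 hx).2), hfs] at h7
              omega
            · intro i hi
              obtain ⟨x, hx, rfl⟩ := Multiset.mem_map.1 hi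
              have h2 := (Multiset.mem_filter.1 hx).2
              have h3 := hpos x (Multiset.mem_of_mem_filter hx)
              omega
        · -- hj : backward mem
          intro p hp
          simp only [Finset.mem_coe] at hp ⊢
          rw [Finset.mem_product] at hp
          obtain ⟨h1, h2⟩ := hp
          rw [parts6, Finset.mem_filter, mem_parts] at h1
          rw [mem_parts] at h2
          rw [Finset.mem_filter, mem_parts]
          have hmap : ∀ i ∈ p.2.map (6 * ·), 6 ∣ i := by
            intro i hi; obtain ⟨x, _, rfl⟩ := Multiset.mem_map.1 hi; exact ⟨x, rfl⟩
          have hsummap : (p.2.map (6 * ·)).sum = 6 * m := by rw [sum_map_mul6, h2.1]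
          refine ⟨⟨?_, ?_⟩, ?_⟩
          · rw [Multiset.sum_add, h1.1.1, hsummap]; omega
          · intro i hi
            rcases Multiset.mem_add.1 hi with h | h
            · exact h1.1.2 i h
            · obtain ⟨x, hx, rfl⟩ := Multiset.mem_map.1 h
              have := h2.2 x hx; omega
          · rw [Multiset.filter_add, Multiset.filter_eq_nil.2 (fun i hi => h1.2 i hi),
              Multiset.filter_eq_self.2 hmap, zero_add, hsummap]
        · -- left inverse
          intro M hM
          simp only [Finset.mem_coe] at hM
          rw [Finset.mem_filter, mem_parts] at hM
          dsimp only
          rw [map_div_mul (fun x hx => (Multiset.mem_filter.1 hx).2), add_comm]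
          exact Multiset.filter_add_not _ M
        · -- right inverse
          intro p hp
          simp only [Finset.mem_coe] at hp
          rw [Finset.mem_product] at hp
          obtain ⟨h1, h2⟩ := hp
          rw [parts6, Finset.mem_filter, mem_parts] at h1
          rw [mem_parts] at h2
          have hmap : ∀ i ∈ p.2.map (6 * ·), 6 ∣ i := by
            intro i hi; obtain ⟨x, _, rfl⟩ := Multiset.mem_map.1 hi; exact ⟨x, rfl⟩
          have e1 : (p.1 + p.2.map (6 * ·)).filter (fun i => ¬ 6 ∣ i) = p.1 := by
            have e1a : p.1.filter (fun i => ¬ 6 ∣ i) = p.1 :=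
              Multiset.filter_eq_self.2 (fun i hi => h1.2 i hi)
            have e1b : (p.2.map (6 * ·)).filter (fun i => ¬ 6 ∣ i) = 0 :=
              Multiset.filter_eq_nil.2 (fun i hi hd => hd (hmap i hi))
            rw [Multiset.filter_add, e1a, e1b, add_zero]
          have e2 : ((p.1 + p.2.map (6 * ·)).filter (6 ∣ ·)).map (· / 6) = p.2 := by
            have e2a : p.1.filter (6 ∣ ·) = 0 :=
              Multiset.filter_eq_nil.2 (fun i hi => h1.2 i hi)
            have e2b : (p.2.map (6 * ·)).filter (6 ∣ ·) = p.2.map (6 * ·) :=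
              Multiset.filter_eq_self.2 hmap
            rw [Multiset.filter_add, e2a, e2b, zero_add, Multiset.map_map]
            refine (Multiset.map_congr rfl ?_).trans (Multiset.map_id _)
            intro x hx
            simp only [Function.comp_apply, id]
            omega
          rw [Prod.ext_iff]
          exact ⟨e1, e2⟩
      rw [hbij, Finset.card_product, card_parts6, card_parts]
      have hle : (0:ℤ) ≤ (a : ℤ) - 6 * m := by omega
      rw [b6z, if_pos hle]
      have : ((a:ℤ) - 6 * m).toNat = a - 6 * m := by omega
      rw [this]
      push_cast
      ring
    · have hempty : (parts a).filter (fun M => (M.filter (6 ∣ ·)).sum = 6 * m) = ∅ := by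
        rw [Finset.filter_eq_empty_iff]
        intro M hM
        rw [mem_parts] at hM
        obtain ⟨u, hu⟩ := Multiset.le_iff_exists_add.1 (Multiset.filter_le (6 ∣ ·) M)
        have : M.sum = (M.filter (6 ∣ ·)).sum + u.sum := by rw [← Multiset.sum_add, ← hu]
        omega
      rw [hempty, b6z, if_neg (by omega)]
      simp
  calc (pnat a : ℤ) = (((parts a).card : ℕ) : ℤ) := by rw [card_parts]
    _ = ∑ m ∈ range (a + 1), b6z ((a : ℤ) - 6 * m) * pnat m := by
        rw [hcard]
        push_cast
        exact Finset.sum_congr rfl key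

lemma pentz_pred (j : ℤ) : pentz (j - 1) = pentz j - 3 * j + 2 := by
  have := pentz_succ (j - 1); simp at this; omega

/-! multiset helpers -/
def inc (N : Multiset ℕ) : Multiset ℕ := N.map (· + 1)
def dec (N : Multiset ℕ) : Multiset ℕ := (N.filter (fun x => 2 ≤ x)).map (· - 1)

lemma sup_mem {M : Multiset ℕ} (h : M ≠ 0) : M.sup ∈ M := by
  induction M using Multiset.induction with
  | empty => simp at h
  | cons a s ih =>
    rw [Multiset.sup_cons]
    rcases eq_or_ne s 0 with rfl | hs
    · simp
    · rcases le_total a s.sup with h1 | h1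
      · rw [sup_eq_right.2 h1]; exact Multiset.mem_cons_of_mem (ih hs)
      · rw [sup_eq_left.2 h1]; exact Multiset.mem_cons_self a s

lemma card_inc (N : Multiset ℕ) : Multiset.card (inc N) = Multiset.card N :=
  Multiset.card_map _ _

lemma sum_inc (N : Multiset ℕ) : (inc N).sum = N.sum + Multiset.card N := by
  induction N using Multiset.induction with
  | empty => simp [inc]
  | cons a s ih => simp only [inc, Multiset.map_cons, Multiset.sum_cons,
      Multiset.card_cons] at *; omega

lemma pos_inc {N : Multiset ℕ} : ∀ i ∈ inc N, 0 < i := by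
  intro i hi; obtain ⟨x, _, rfl⟩ := Multiset.mem_map.1 hi; omega

lemma pos_dec {N : Multiset ℕ} : ∀ i ∈ dec N, 0 < i := by
  intro i hi
  obtain ⟨x, hx, rfl⟩ := Multiset.mem_map.1 hi
  have := (Multiset.mem_filter.1 hx).2; omega

lemma dec_add (A B : Multiset ℕ) : dec (A + B) = dec A + dec B := by
  rw [dec, Multiset.filter_add, Multiset.map_add]; rfl

lemma dec_replicate_one (k : ℕ) : dec (Multiset.replicate k 1) = 0 := by
  rw [dec, Multiset.filter_eq_nil.2, Multiset.map_zero]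
  intro a ha
  rw [Multiset.eq_of_mem_replicate ha]; omega

lemma dec_inc {N : Multiset ℕ} (h : ∀ i ∈ N, 0 < i) : dec (inc N) = N := by
  induction N using Multiset.induction with
  | empty => rfl
  | cons a s ih =>
    have ha : 0 < a := h a (Multiset.mem_cons_self a s)
    rw [inc, Multiset.map_cons, ← inc, dec, Multiset.filter_cons_of_pos _ (show 2 ≤ a + 1 by omega),
      Multiset.map_cons, ← dec, ih (fun i hi => h i (Multiset.mem_cons_of_mem hi))]
    simp

lemma inc_dec {N : Multiset ℕ} : inc (dec N) = N.filter (fun x => 2 ≤ x) := by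
  rw [inc, dec, Multiset.map_map]
  refine (Multiset.map_congr rfl ?_).trans (Multiset.map_id _)
  intro x hx
  have := (Multiset.mem_filter.1 hx).2
  simp only [Function.comp_apply, id]
  omega

lemma card_dec_le (N : Multiset ℕ) : Multiset.card (dec N) ≤ Multiset.card N := by
  rw [dec, Multiset.card_map]
  exact Multiset.card_le_card (Multiset.filter_le _ _)

lemma ones_part {N : Multiset ℕ} (h : ∀ i ∈ N, 0 < i) :
    N.filter (fun x => ¬ 2 ≤ x) = Multiset.replicate (Multiset.card N - Multiset.card (dec N)) 1 := by
  have hcard : Multiset.card (N.filter (fun x => 2 ≤ x)) + Multiset.card (N.filter (fun x => ¬ 2 ≤ x))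
      = Multiset.card N := by
    rw [← Multiset.card_add, Multiset.filter_add_not]
  rw [Multiset.eq_replicate]
  refine ⟨?_, ?_⟩
  · rw [dec, Multiset.card_map]; omega
  · intro b hb
    have h1 := (Multiset.mem_filter.1 hb).2
    have h2 := h b (Multiset.mem_of_mem_filter hb)
    omega

lemma recompose {N : Multiset ℕ} (h : ∀ i ∈ N, 0 < i) :
    inc (dec N) + Multiset.replicate (Multiset.card N - Multiset.card (dec N)) 1 = N := by
  rw [inc_dec, ← ones_part h, Multiset.filter_add_not]

lemma sum_dec {N : Multiset ℕ} (h : ∀ i ∈ N, 0 < i) :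
    (dec N).sum + Multiset.card N = N.sum := by
  have := congrArg Multiset.sum (recompose h)
  rw [Multiset.sum_add, sum_inc, Multiset.sum_replicate, smul_eq_mul, mul_one] at this
  have hle := card_dec_le N
  omega

lemma sup_replicate_one {k : ℕ} (hk : k ≠ 0) : (Multiset.replicate k 1).sup = 1 := by
  apply le_antisymm
  · exact Multiset.sup_le.2 (fun b hb => le_of_eq (Multiset.eq_of_mem_replicate hb))
  · exact Multiset.le_sup (Multiset.mem_replicate.2 ⟨hk, rfl⟩)

/-! the involution -/
def phi (x : Σ _ : ℤ, Multiset ℕ) : Σ _ : ℤ, Multiset ℕ :=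
  if x.2 = 0 ∧ x.1 < 0 then ⟨x.1 + 1, Multiset.replicate (-3 * x.1 - 1).toNat 1⟩
  else if (Multiset.card x.2 : ℤ) + 3 * x.1 ≤ (x.2.sup : ℤ) ∧ x.2 ≠ 0 then
    ⟨x.1 + 1, inc (x.2.erase x.2.sup) +
      Multiset.replicate ((x.2.sup : ℤ) - 3 * x.1 - Multiset.card x.2).toNat 1⟩
  else if (Multiset.card x.2 : ℤ) + 3 * x.1 = 2 then ⟨x.1 - 1, 0⟩
  else ⟨x.1 - 1, ((Multiset.card x.2 : ℤ) + 3 * x.1 - 2).toNat ::ₘ dec x.2⟩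

lemma phi_step {c : ℕ} (hc : 0 < c) (j : ℤ) (M : Multiset ℕ)
    (hpos : ∀ i ∈ M, 0 < i) (hsum : (M.sum : ℤ) = (c : ℤ) - pentz j) :
    (∀ i ∈ (phi ⟨j, M⟩).2, 0 < i) ∧
    (((phi ⟨j, M⟩).2.sum : ℤ) = (c : ℤ) - pentz (phi ⟨j, M⟩).1) ∧
    phi (phi ⟨j, M⟩) = ⟨j, M⟩ ∧
    ((phi ⟨j, M⟩).1 = j + 1 ∨ (phi ⟨j, M⟩).1 = j - 1) := by
  by_cases h1 : M = 0 ∧ j < 0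
  · -- CASE 1 : special A
    obtain ⟨hM0, hj0⟩ := h1
    subst hM0
    have hpent : pentz j = c := by
      rw [Multiset.sum_zero] at hsum; push_cast at hsum; omega
    have hsZ : (((-3 * j - 1).toNat : ℤ)) = -3 * j - 1 := Int.toNat_of_nonneg (by omega)
    have hphi : phi ⟨j, (0 : Multiset ℕ)⟩ = ⟨j + 1, Multiset.replicate (-3 * j - 1).toNat 1⟩ := by
      rw [phi, if_pos ⟨rfl, hj0⟩]
    rw [hphi]
    refine ⟨?_, ?_, ?_, Or.inl rfl⟩
    · intro i hi; rw [Multiset.eq_of_mem_replicate hi]; omega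
    · rw [Multiset.sum_replicate, smul_eq_mul, mul_one, pentz_succ]
      omega
    · have hsne : (-3 * j - 1).toNat ≠ 0 := by omega
      have hcard : ((Multiset.card (Multiset.replicate (-3 * j - 1).toNat 1) : ℕ) : ℤ)
          = -3 * j - 1 := by rw [Multiset.card_replicate]; omega
      have hsup : (Multiset.replicate (-3 * j - 1).toNat 1).sup = 1 :=
        sup_replicate_one hsne
      rw [phi]
      rw [if_neg, if_neg, if_pos]
      · show (⟨j + 1 - 1, 0⟩ : Σ _ : ℤ, Multiset ℕ) = ⟨j, 0⟩
        rw [add_sub_cancel_right]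
      · show (Multiset.card (Multiset.replicate (-3 * j - 1).toNat 1) : ℤ) + 3 * (j + 1) = 2
        omega
      · rintro ⟨hle, -⟩
        rw [hsup] at hle
        push_cast at hle
        omega
      · rintro ⟨hz, -⟩
        exact hsne (by simpa using congrArg Multiset.card hz)
  · by_cases h2 : (Multiset.card M : ℤ) + 3 * j ≤ (M.sup : ℤ) ∧ M ≠ 0
    · -- CASE 2 : generic A
      obtain ⟨hW, hMne⟩ := h2
      have hWmem : M.sup ∈ M := sup_mem hMne
      have hW1 : 0 < M.sup := hpos _ hWmem
      have hcons : M.sup ::ₘ M.erase M.sup = M := Multiset.cons_erase hWmem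
      have hsumE : M.sup + (M.erase M.sup).sum = M.sum := by
        conv_rhs => rw [← hcons]
        rw [Multiset.sum_cons]
      have hcardE : Multiset.card (M.erase M.sup) + 1 = Multiset.card M := by
        conv_rhs => rw [← hcons]
        rw [Multiset.card_cons]
      have hposE : ∀ i ∈ M.erase M.sup, 0 < i :=
        fun i hi => hpos i (Multiset.mem_of_mem_erase hi)
      have hsZ : ((((M.sup : ℤ) - 3 * j - Multiset.card M).toNat : ℕ) : ℤ)
          = (M.sup : ℤ) - 3 * j - Multiset.card M := Int.toNat_of_nonneg (by omega)
      have hphi : phi ⟨j, M⟩ = ⟨j + 1, inc (M.erase M.sup) +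
          Multiset.replicate ((M.sup : ℤ) - 3 * j - Multiset.card M).toNat 1⟩ := by
        rw [phi, if_neg h1, if_pos ⟨hW, hMne⟩]
      set M' : Multiset ℕ := inc (M.erase M.sup) +
          Multiset.replicate ((M.sup : ℤ) - 3 * j - Multiset.card M).toNat 1 with hM'
      have hposM' : ∀ i ∈ M', 0 < i := by
        intro i hi
        rcases Multiset.mem_add.1 hi with h | h
        · exact pos_inc i h
        · rw [Multiset.eq_of_mem_replicate h]; omega
      have hsumM' : (M'.sum : ℤ) = (c : ℤ) - pentz (j + 1) := by
        have h5 : M'.sum = (M.erase M.sup).sum + Multiset.card (M.erase M.sup)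
            + ((M.sup : ℤ) - 3 * j - Multiset.card M).toNat := by
          rw [hM', Multiset.sum_add, sum_inc, Multiset.sum_replicate, smul_eq_mul, mul_one]
        have h6 := pentz_succ j
        omega
      have hcardM' : ((Multiset.card M' : ℕ) : ℤ) = (M.sup : ℤ) - 3 * j - 1 := by
        have h5 : Multiset.card M' = Multiset.card (M.erase M.sup)
            + ((M.sup : ℤ) - 3 * j - Multiset.card M).toNat := by
          rw [hM', Multiset.card_add, card_inc, Multiset.card_replicate]
        omega
      have hsupM' : M'.sup ≤ M.sup + 1 := by
        apply Multiset.sup_le.2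
        intro b hb
        rcases Multiset.mem_add.1 hb with h | h
        · obtain ⟨y, hy, rfl⟩ := Multiset.mem_map.1 h
          have := Multiset.le_sup (Multiset.mem_of_mem_erase hy)
          omega
        · rw [Multiset.eq_of_mem_replicate h]; omega
      rw [hphi]
      refine ⟨hposM', hsumM', ?_, Or.inl rfl⟩
      -- phi ⟨j+1, M'⟩ = ⟨j, M⟩
      rw [phi]
      dsimp only
      rw [if_neg, if_neg, if_neg]
      · show (⟨j + 1 - 1, ((Multiset.card M' : ℤ) + 3 * (j + 1) - 2).toNat ::ₘ dec M'⟩ :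
            Σ _ : ℤ, Multiset ℕ) = ⟨j, M⟩
        have hu : ((Multiset.card M' : ℤ) + 3 * (j + 1) - 2).toNat = M.sup := by omega
        have hdecM' : dec M' = M.erase M.sup := by
          rw [hM', dec_add, dec_inc hposE, dec_replicate_one, add_zero]
        rw [add_sub_cancel_right, hu, hdecM', hcons]
      · show ¬ ((Multiset.card M' : ℤ) + 3 * (j + 1) = 2)
        omega
      · rintro ⟨hle, -⟩
        have : (M'.sup : ℤ) ≤ (M.sup : ℤ) + 1 := by exact_mod_cast Nat.cast_le.2 hsupM'
        omega
      · rintro ⟨hz, hneg⟩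
        have : Multiset.card M' = 0 := by rw [hz]; rfl
        omega
    · by_cases h3 : (Multiset.card M : ℤ) + 3 * j = 2
      · -- CASE 3 : special B
        have hMne : M ≠ 0 := by
          rintro rfl
          rw [Multiset.card_zero] at h3
          omega
        have hT1 : 0 < Multiset.card M := Multiset.card_pos.2 hMne
        have hWlt : (M.sup : ℤ) < (Multiset.card M : ℤ) + 3 * j := by
          by_contra h
          exact h2 ⟨le_of_not_gt h, hMne⟩
        have hones : ∀ b ∈ M, b = 1 := by
          intro b hb
          have hub := Multiset.le_sup hb
          have hlb := hpos b hb
          omega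
        have hMrep : M = Multiset.replicate (Multiset.card M) 1 :=
          Multiset.eq_replicate_card.2 hones
        have hMsum : M.sum = Multiset.card M := by
          conv_lhs => rw [hMrep]
          rw [Multiset.sum_replicate, smul_eq_mul, mul_one]
        have hj0 : j ≤ 0 := by omega
        have hphi : phi ⟨j, M⟩ = ⟨j - 1, 0⟩ := by
          rw [phi, if_neg h1, if_neg h2, if_pos h3]
        rw [hphi]
        have hpp := pentz_pred j
        refine ⟨by simp, ?_, ?_, Or.inr rfl⟩
        · rw [Multiset.sum_zero]
          push_cast
          omega
        · rw [phi]
          dsimp only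
          rw [if_pos ⟨rfl, by omega⟩]
          have he : (-3 * (j - 1) - 1).toNat = Multiset.card M := by omega
          rw [he, sub_add_cancel, ← hMrep]
      · -- CASE 4 : generic B
        have hT3 : 3 ≤ (Multiset.card M : ℤ) + 3 * j := by
          rcases eq_or_ne M 0 with rfl | hMne
          · have hj0 : 0 ≤ j := by
              by_contra h
              exact h1 ⟨rfl, by omega⟩
            have hp0 : pentz 0 = 0 := by decide
            have hjne : j ≠ 0 := by
              rintro rfl
              rw [Multiset.sum_zero] at hsum
              push_cast at hsum
              omega
            rw [Multiset.card_zero]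
            omega
          · have hWlt : (M.sup : ℤ) < (Multiset.card M : ℤ) + 3 * j := by
              by_contra h
              exact h2 ⟨le_of_not_gt h, hMne⟩
            have hW1 : 0 < M.sup := hpos _ (sup_mem hMne)
            omega
        have huZ : (((Multiset.card M : ℤ) + 3 * j - 2).toNat : ℤ)
            = (Multiset.card M : ℤ) + 3 * j - 2 := Int.toNat_of_nonneg (by omega)
        have hphi : phi ⟨j, M⟩ =
            ⟨j - 1, ((Multiset.card M : ℤ) + 3 * j - 2).toNat ::ₘ dec M⟩ := by
          rw [phi, if_neg h1, if_neg h2, if_neg h3]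
        set u : ℕ := ((Multiset.card M : ℤ) + 3 * j - 2).toNat with hu
        set M' : Multiset ℕ := u ::ₘ dec M with hM'
        have hdecle : ∀ x ∈ dec M, x ≤ u := by
          intro x hx
          obtain ⟨y, hy, rfl⟩ := Multiset.mem_map.1 hx
          obtain ⟨hyM, hy2⟩ := Multiset.mem_filter.1 hy
          have hMne : M ≠ 0 := by
            rintro rfl
            exact absurd hyM (by simp)
          have hWlt : (M.sup : ℤ) < (Multiset.card M : ℤ) + 3 * j := by
            by_contra h
            exact h2 ⟨le_of_not_gt h, hMne⟩
          have := Multiset.le_sup hyM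
          omega
        have hsupM' : M'.sup = u := by
          rw [hM', Multiset.sup_cons]
          exact sup_eq_left.2 (Multiset.sup_le.2 hdecle)
        have hcardM' : Multiset.card M' = Multiset.card (dec M) + 1 := by
          rw [hM', Multiset.card_cons]
        have hDle : Multiset.card (dec M) ≤ Multiset.card M := card_dec_le M
        have hsdec := sum_dec hpos
        rw [hphi]
        dsimp only
        refine ⟨?_, ?_, ?_, Or.inr rfl⟩
        · intro i hi
          rcases Multiset.mem_cons.1 hi with rfl | h
          · omega
          · exact pos_dec i h
        · rw [hM', Multiset.sum_cons]
          have hpp := pentz_pred j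
          omega
        · rw [phi]
          dsimp only
          rw [if_neg, if_pos, hsupM']
          · show (⟨j - 1 + 1, inc (M'.erase u) +
                Multiset.replicate ((u : ℤ) - 3 * (j - 1) - Multiset.card M').toNat 1⟩ :
                Σ _ : ℤ, Multiset ℕ) = ⟨j, M⟩
            have he : M'.erase u = dec M := by
              rw [hM', Multiset.erase_cons_head]
            have hexp : ((u : ℤ) - 3 * (j - 1) - Multiset.card M').toNat
                = Multiset.card M - Multiset.card (dec M) := by omega
            rw [sub_add_cancel, he, hexp, recompose hpos]
          · constructor
            · rw [hsupM']
              omega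
            · rw [hM']
              exact Multiset.cons_ne_zero
          · rintro ⟨hz, -⟩
            rw [hM'] at hz
            exact Multiset.cons_ne_zero hz

lemma pent_rec (c : ℕ) (hc : 0 < c) (J : Finset ℤ) (hJ : ∀ j : ℤ, pentz j ≤ (c : ℤ) → j ∈ J) :
    ∑ j ∈ J, (-1 : ℤ) ^ j.natAbs * pz ((c : ℤ) - pentz j) = 0 := by
  classical
  have h0 : ∀ j ∈ J, (-1 : ℤ) ^ j.natAbs * pz ((c : ℤ) - pentz j) ≠ 0 → pentz j ≤ (c : ℤ) := by
    intro j _ hne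
    by_contra h
    exact hne (by rw [pz, if_neg (by omega), mul_zero])
  rw [← Finset.sum_filter_of_ne h0]
  have hterm : ∀ j ∈ J.filter (fun j => pentz j ≤ (c : ℤ)),
      (-1 : ℤ) ^ j.natAbs * pz ((c : ℤ) - pentz j)
        = ∑ _M ∈ parts ((c : ℤ) - pentz j).toNat, (-1 : ℤ) ^ j.natAbs := by
    intro j hj
    rw [Finset.mem_filter] at hj
    rw [Finset.sum_const, pz, if_pos (by omega), card_parts, nsmul_eq_mul, mul_comm]
  rw [Finset.sum_congr rfl hterm, Finset.sum_sigma']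
  set S := (J.filter (fun j => pentz j ≤ (c : ℤ))).sigma
      (fun j => parts ((c : ℤ) - pentz j).toNat) with hS
  have hfacts : ∀ a : Σ _ : ℤ, Multiset ℕ, a ∈ S →
      (∀ i ∈ a.2, 0 < i) ∧ ((a.2.sum : ℤ) = (c : ℤ) - pentz a.1) := by
    intro a ha
    rw [hS, Finset.mem_sigma, Finset.mem_filter] at ha
    obtain ⟨⟨-, hpj⟩, hp⟩ := ha
    rw [mem_parts] at hp
    exact ⟨hp.2, by omega⟩
  apply Finset.sum_involution (fun a _ => phi a)
  · -- signs cancel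
    intro a ha
    obtain ⟨hpos, hsum⟩ := hfacts a ha
    obtain ⟨j, M⟩ := a
    obtain ⟨-, -, -, hfst⟩ := phi_step hc j M hpos hsum
    rcases hfst with h | h
    · rw [h, sign_succ]; ring
    · rw [h, show j = (j - 1) + 1 by ring, sign_succ, sub_add_cancel]; ring
  · -- no fixed point needed
    intro a ha _
    obtain ⟨hpos, hsum⟩ := hfacts a ha
    obtain ⟨j, M⟩ := a
    obtain ⟨-, -, -, hfst⟩ := phi_step hc j M hpos hsum
    intro h
    have := congrArg Sigma.fst h
    dsimp only at this
    rcases hfst with h' | h' <;> omega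
  · -- maps into S
    intro a ha
    obtain ⟨hpos, hsum⟩ := hfacts a ha
    obtain ⟨j, M⟩ := a
    obtain ⟨hpos', hsum', -, -⟩ := phi_step hc j M hpos hsum
    rw [hS, Finset.mem_sigma, Finset.mem_filter]
    have hple : pentz (phi ⟨j, M⟩).fst ≤ (c : ℤ) := by
      have : (0 : ℤ) ≤ ((phi ⟨j, M⟩).snd.sum : ℤ) := by positivity
      omega
    refine ⟨⟨hJ _ hple, hple⟩, ?_⟩
    rw [mem_parts]
    exact ⟨by omega, hpos'⟩
  · -- involution
    intro a ha
    obtain ⟨hpos, hsum⟩ := hfacts a ha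
    obtain ⟨j, M⟩ := a
    exact (phi_step hc j M hpos hsum).2.2.1

lemma conv' (x : ℤ) (n : ℕ) (hx : x ≤ (n : ℤ)) :
    pz x = ∑ m ∈ range (n + 1), b6z (x - 6 * m) * pnat m := by
  rcases le_or_gt 0 x with h | h
  · obtain ⟨a, rfl⟩ : ∃ a : ℕ, x = (a : ℤ) := ⟨x.toNat, by omega⟩
    rw [pz, if_pos h, Int.toNat_natCast, conv a]
    apply Finset.sum_subset
    · apply Finset.range_subset_range.2; omega
    · intro m _ hm
      rw [mem_range, not_lt] at hm
      rw [b6z, if_neg (by rw [mem_range] at *; omega), zero_mul]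
  · rw [pz, if_neg (by omega)]
    symm
    apply Finset.sum_eq_zero
    intro m _
    rw [b6z, if_neg (by omega), zero_mul]

lemma reindex (n P : ℕ) :
    ∑ m ∈ range (n + 1), b6z ((n : ℤ) - 6 * P - 6 * m) * pnat m
      = ∑ k ∈ range (n + 1), b6z ((n : ℤ) - 6 * k) * pz ((k : ℤ) - P) := by
  set F : ℕ → ℤ := fun t => b6z ((n : ℤ) - 6 * t) * pz ((t : ℤ) - P) with hF
  have h1 : ∀ m ∈ range (n + 1), b6z ((n : ℤ) - 6 * P - 6 * m) * pnat m = F (P + m) := by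
    intro m _
    rw [hF]
    dsimp only
    rw [show ((P + m : ℕ) : ℤ) - P = (m : ℤ) by push_cast; ring, pz, if_pos (by positivity),
      Int.toNat_natCast]
    congr 2
    push_cast
    ring
  rw [Finset.sum_congr rfl h1]
  have h2 : ∑ m ∈ range (n + 1), F (P + m) = ∑ t ∈ Finset.Icc P (P + n), F t := by
    rw [← Finset.Ico_add_one_right_eq_Icc, Finset.sum_Ico_eq_sum_range,
      show P + n + 1 - P = n + 1 by omega]
  rw [h2]
  have h3 : ∑ t ∈ Finset.Icc P (P + n), F t = ∑ t ∈ Finset.Icc 0 (P + n), F t := by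
    apply Finset.sum_subset
    · intro t ht; rw [Finset.mem_Icc] at *; omega
    · intro t ht ht2
      rw [Finset.mem_Icc] at ht ht2
      rw [hF]
      dsimp only
      rw [pz, if_neg (by omega), mul_zero]
  rw [h3]
  have h4 : ∑ t ∈ Finset.Icc 0 n, F t = ∑ t ∈ Finset.Icc 0 (P + n), F t := by
    apply Finset.sum_subset
    · intro t ht; rw [Finset.mem_Icc] at *; omega
    · intro t ht ht2
      rw [Finset.mem_Icc] at ht ht2
      rw [hF]
      dsimp only
      rw [b6z, if_neg (by omega), zero_mul]
  rw [← h4]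
  congr 1
  rw [← Nat.Ico_zero_eq_range, Finset.Ico_add_one_right_eq_Icc]

theorem stmt5 (n : ℕ) :
    (b6 n : ℤ) =
      ∑ j ∈ Finset.Icc (-(n : ℤ) - 1) ((n : ℤ) + 1),
        (-1) ^ j.natAbs * pz ((n : ℤ) - 3 * j * (3 * j - 1)) := by
  set J := Finset.Icc (-(n : ℤ) - 1) ((n : ℤ) + 1) with hJdef
  have hJ : ∀ (c : ℕ), c ≤ n → ∀ j : ℤ, pentz j ≤ (c : ℤ) → j ∈ J := by
    intro c hc j hp
    have := natAbs_le_pentz j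
    rw [hJdef, Finset.mem_Icc]
    omega
  have step1 : ∀ j ∈ J, (-1 : ℤ) ^ j.natAbs * pz ((n : ℤ) - 3 * j * (3 * j - 1))
      = ∑ k ∈ range (n + 1), (-1 : ℤ) ^ j.natAbs *
          (b6z ((n : ℤ) - 6 * k) * pz ((k : ℤ) - pentz j)) := by
    intro j _
    have h6 : (n : ℤ) - 3 * j * (3 * j - 1) = (n : ℤ) - 6 * pentz j := by
      linear_combination 3 * two_pentz j
    have hple : (n : ℤ) - 6 * pentz j ≤ (n : ℤ) := by
      have := pentz_nonneg j; omega
    have hPdef : ((pentz j).toNat : ℤ) = pentz j := Int.toNat_of_nonneg (pentz_nonneg j)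
    rw [h6, conv' _ n hple, ← Finset.mul_sum]
    congr 1
    have hre := reindex n (pentz j).toNat
    rw [hPdef] at hre
    exact hre
  have inner0 : ∑ j ∈ J, (-1 : ℤ) ^ j.natAbs * pz (((0 : ℕ) : ℤ) - pentz j) = 1 := by
    rw [Finset.sum_eq_single_of_mem (0 : ℤ)
      (by rw [hJdef, Finset.mem_Icc]; constructor <;> omega)]
    · have hp0 : pentz 0 = 0 := by decide
      rw [hp0]
      norm_num [pz, pnat_zero]
    · intro j _ hjne
      have h1 := natAbs_le_pentz j
      have h2 : 1 ≤ pentz j := by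
        have : 1 ≤ j.natAbs := by omega
        omega
      rw [pz, if_neg (by push_cast; omega), mul_zero]
  calc (b6 n : ℤ)
      = b6z ((n : ℤ) - 6 * ((0 : ℕ) : ℤ)) *
          (∑ j ∈ J, (-1 : ℤ) ^ j.natAbs * pz (((0 : ℕ) : ℤ) - pentz j)) := by
        rw [inner0, mul_one, b6z]
        norm_num
    _ = ∑ k ∈ range (n + 1), b6z ((n : ℤ) - 6 * k) *
          ∑ j ∈ J, (-1 : ℤ) ^ j.natAbs * pz ((k : ℤ) - pentz j) := by
        rw [Finset.sum_eq_single_of_mem 0 (Finset.mem_range.2 (by omega))]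
        intro k hk hkne
        rw [Finset.mem_range] at hk
        rw [pent_rec k (by omega) J (hJ k (by omega)), mul_zero]
    _ = ∑ k ∈ range (n + 1), ∑ j ∈ J, (-1 : ℤ) ^ j.natAbs *
          (b6z ((n : ℤ) - 6 * k) * pz ((k : ℤ) - pentz j)) := by
        refine Finset.sum_congr rfl fun k _ => ?_
        rw [Finset.mul_sum]
        refine Finset.sum_congr rfl fun j _ => ?_
        ring
    _ = ∑ j ∈ J, ∑ k ∈ range (n + 1), (-1 : ℤ) ^ j.natAbs *
          (b6z ((n : ℤ) - 6 * k) * pz ((k : ℤ) - pentz j)) := Finset.sum_comm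
    _ = ∑ j ∈ J, (-1 : ℤ) ^ j.natAbs * pz ((n : ℤ) - 3 * j * (3 * j - 1)) :=
        (Finset.sum_congr rfl step1).symm
end
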